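/- arXiv:2008.03137 — 5 statements merged into one kernel-verified Lean document; each statement's English description precedes it below -/
import Mathlib

section
/- (One-vertex electric-network reduction does not decrease the random walk spectral gap.) Let V be a finite set with |V| ≥ 3, let c : V × V → ℝ be a symmetric nonnegative edge-weight function with zero diagonal, and let i ∈ V be a vertex with Σ_{ℓ∈V} c(i,ℓ) > 0. Define new weights c' on V ∖ {i} by c'(j,k) = c(j,k) + c(i,j)·c(i,k)/(Σ_{ℓ∈V} c(i,ℓ)) for j ≠ k in V ∖ {i}, and c'(j,j) = 0. Then λ_RW(c') ≥ λ_RW(c), where λ_RW(c') is the random walk spectral gap on the vertex set V ∖ {i} with weights c'. -/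
open Finset

/-- Variance of `φ : V → ℝ` under the uniform probability measure on the finite set `V`. -/
noncomputable def uniformVar {V : Type*} [Fintype V] (φ : V → ℝ) : ℝ :=
  (∑ j, φ j ^ 2) / (Fintype.card V : ℝ) - ((∑ j, φ j) / (Fintype.card V : ℝ)) ^ 2

/-- Dirichlet form of the single-particle random walk with edge weights `c`. -/
noncomputable def rwDirichlet {V : Type*} [Fintype V] (c : V → V → ℝ) (φ : V → ℝ) : ℝ :=
  (1 / (2 * (Fintype.card V : ℝ))) * ∑ j, ∑ k, c j k * (φ j - φ k) ^ 2

/-- Spectral gap of the single-particle random walk with edge weights `c`. -/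
noncomputable def lambdaRW {V : Type*} [Fintype V] (c : V → V → ℝ) : ℝ :=
  sSup {l : ℝ | 0 ≤ l ∧ ∀ φ : V → ℝ, l * uniformVar φ ≤ rwDirichlet c φ}

lemma sum_sq_expand {X : Type*} [Fintype X] (f : X → ℝ) (b : ℝ) :
    ∑ x, (f x - b) ^ 2
      = ∑ x, f x ^ 2 - 2 * b * (∑ x, f x) + (Fintype.card X : ℝ) * b ^ 2 := by
  have h : ∀ x, (f x - b) ^ 2 = f x ^ 2 - 2 * b * f x + b ^ 2 := fun x => by ring
  simp_rw [h, Finset.sum_add_distrib, Finset.sum_sub_distrib, ← Finset.mul_sum,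
    Finset.sum_const, Finset.card_univ, nsmul_eq_mul]

lemma weighted_sum_sq_expand {X : Type*} [Fintype X] (a f : X → ℝ) (t : ℝ) :
    ∑ x, a x * (t - f x) ^ 2
      = (∑ x, a x) * t ^ 2 - 2 * t * (∑ x, a x * f x) + ∑ x, a x * f x ^ 2 := by
  have h : ∀ x, a x * (t - f x) ^ 2
      = a x * t ^ 2 - 2 * t * (a x * f x) + a x * f x ^ 2 := fun x => by ring
  simp_rw [h, Finset.sum_add_distrib, Finset.sum_sub_distrib, ← Finset.mul_sum,
    ← Finset.sum_mul]

lemma double_sum_expand {X : Type*} [Fintype X] (a f : X → ℝ) :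
    ∑ j, ∑ k, a j * a k * (f j - f k) ^ 2
      = 2 * (∑ j, a j) * (∑ j, a j * f j ^ 2) - 2 * (∑ j, a j * f j) ^ 2 := by
  have h : ∀ j k : X, a j * a k * (f j - f k) ^ 2
      = (a j * f j ^ 2) * a k + a j * (a k * f k ^ 2)
        - 2 * ((a j * f j) * (a k * f k)) := fun j k => by ring
  simp_rw [h, Finset.sum_sub_distrib, Finset.sum_add_distrib]
  simp only [← Finset.mul_sum, ← Finset.sum_mul]
  ring

/-- Schur / star-triangle scalar identity. -/
lemma schur_identity {X : Type*} [Fintype X] (a f : X → ℝ) (hs : (∑ x, a x) ≠ 0) :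
    2 * ∑ x, a x * ((∑ y, a y * f y) / (∑ y, a y) - f x) ^ 2
      = (1 / (∑ y, a y)) * ∑ j, ∑ k, a j * a k * (f j - f k) ^ 2 := by
  rw [weighted_sum_sq_expand, double_sum_expand]
  field_simp
  ring

lemma card_mul_var {X : Type*} [Fintype X] (hX : (0:ℕ) < Fintype.card X) (f : X → ℝ) :
    (Fintype.card X : ℝ) * uniformVar f
      = ∑ x, (f x - (∑ y, f y) / (Fintype.card X : ℝ)) ^ 2 := by
  have hN : (Fintype.card X : ℝ) ≠ 0 := by positivity
  rw [sum_sq_expand, uniformVar]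
  field_simp
  ring

lemma sum_sq_min {X : Type*} [Fintype X] (hX : (0:ℕ) < Fintype.card X) (f : X → ℝ) (b : ℝ) :
    ∑ x, (f x - (∑ y, f y) / (Fintype.card X : ℝ)) ^ 2 ≤ ∑ x, (f x - b) ^ 2 := by
  have hN : (Fintype.card X : ℝ) ≠ 0 := by positivity
  have key : ∑ x, (f x - b) ^ 2 - ∑ x, (f x - (∑ y, f y) / (Fintype.card X : ℝ)) ^ 2
      = (Fintype.card X : ℝ) * (b - (∑ y, f y) / (Fintype.card X : ℝ)) ^ 2 := by
    rw [sum_sq_expand, sum_sq_expand]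
    field_simp
    ring
  nlinarith [sq_nonneg (b - (∑ y, f y) / (Fintype.card X : ℝ)), (Nat.cast_pos (α := ℝ)).mpr hX]

/-- **One-vertex electric-network reduction does not decrease the random walk spectral
gap.** Removing a vertex `i` (with positive total conductance) and redistributing its
edge weights by `c'(j,k) = c(j,k) + c(i,j)c(i,k)/Σ_ℓ c(i,ℓ)` yields a weighted graph on
`V ∖ {i}` whose random walk spectral gap is at least that of the original one. -/
theorem lambdaRW_reduction {V : Type*} [Fintype V] [DecidableEq V]
    (hcard : 3 ≤ Fintype.card V) (c : V → V → ℝ)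
    (hsymm : ∀ j k, c j k = c k j) (hnonneg : ∀ j k, 0 ≤ c j k)
    (hdiag : ∀ j, c j j = 0) (i : V) (hpos : 0 < ∑ l, c i l) :
    lambdaRW c ≤
      lambdaRW (fun j k : {v : V // v ≠ i} =>
        if (j : V) = (k : V) then 0
        else c (j : V) (k : V) + c i (j : V) * c i (k : V) / ∑ l, c i l) := by
  classical
  have hs0 : (∑ l, c i l) ≠ 0 := ne_of_gt hpos
  have hcard' : Fintype.card {v : V // v ≠ i} = Fintype.card V - 1 := by
    rw [Fintype.card_subtype_compl, Fintype.card_subtype_eq]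
  set N : ℝ := (Fintype.card V : ℝ) with hNdef
  have hN3 : (3:ℝ) ≤ N := by rw [hNdef]; exact_mod_cast hcard
  have hcastcard : ((Fintype.card {v : V // v ≠ i} : ℕ) : ℝ) = N - 1 := by
    rw [hcard', hNdef, Nat.cast_sub (by omega), Nat.cast_one]
  unfold lambdaRW
  refine csSup_le_csSup ?_ ?_ ?_
  · -- BddAbove of target set
    obtain ⟨x, y, hxy⟩ : ∃ x y : {v : V // v ≠ i}, x ≠ y :=
      Fintype.exists_pair_of_one_lt_card (by rw [hcard']; omega)
    set ψ0 : {v : V // v ≠ i} → ℝ := fun v => if v = x then 1 else 0 with hψ0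
    have hsum : ∑ v, ψ0 v = 1 := by simp [hψ0]
    have hsumsq : ∑ v, ψ0 v ^ 2 = 1 := by
      have h : ∀ v, ψ0 v ^ 2 = ψ0 v := by
        intro v; by_cases h : v = x <;> simp [hψ0, h]
      simp_rw [h]; exact hsum
    have hvpos : 0 < uniformVar ψ0 := by
      rw [uniformVar, hsum, hsumsq, hcastcard]
      have hM : (0:ℝ) < N - 1 := by linarith
      have hlt : 1 / (N - 1) < 1 := by rw [div_lt_one hM]; linarith
      have hpos' : (0:ℝ) < 1 / (N - 1) := by positivity
      nlinarith [mul_lt_mul_of_pos_right hlt hpos']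
    refine ⟨rwDirichlet (fun j k : {v : V // v ≠ i} =>
        if (j : V) = (k : V) then 0
        else c (j : V) (k : V) + c i (j : V) * c i (k : V) / ∑ l, c i l) ψ0
        / uniformVar ψ0, ?_⟩
    rintro l ⟨-, hl⟩
    exact (le_div_iff₀ hvpos).2 (hl ψ0)
  · -- source set nonempty
    refine ⟨0, le_refl 0, fun φ => ?_⟩
    rw [zero_mul, rwDirichlet]
    have hN0 : (0:ℝ) < N := by linarith
    apply mul_nonneg (by positivity)
    exact Finset.sum_nonneg fun j _ => Finset.sum_nonneg fun k _ =>
      mul_nonneg (hnonneg j k) (sq_nonneg _)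
  · -- the inclusion
    rintro l ⟨hl0, hE⟩
    refine ⟨hl0, fun ψ => ?_⟩
    set g : V → ℝ := fun v => if h : v = i then 0 else ψ ⟨v, h⟩ with hg
    set t : ℝ := (∑ l, c i l * g l) / (∑ l, c i l) with ht
    set φ : V → ℝ := Function.update g i t with hφdef
    have hφi : φ i = t := Function.update_self i t g
    have hupdate : ∀ v, v ≠ i → φ v = g v := fun v h => Function.update_of_ne h t g
    have hψφ : ∀ v : {v : V // v ≠ i}, ψ v = φ (v : V) := by
      intro v
      rw [hupdate _ v.2]
      have hgv : g (v : V) = ψ ⟨(v : V), v.2⟩ := dif_neg v.2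
      rw [hgv, Subtype.coe_eta]
    set e : Finset V := Finset.univ.erase i with he
    have hmem : ∀ x : V, x ∈ e ↔ x ≠ i := by simp [he]
    -- Dirichlet sums identity
    have hrow : ∀ j, (∑ k, c j k * (φ j - φ k) ^ 2)
        = (∑ k ∈ e, c j k * (φ j - φ k) ^ 2) + c j i * (φ j - t) ^ 2 := by
      intro j
      rw [← Finset.sum_erase_add Finset.univ (fun k => c j k * (φ j - φ k) ^ 2)
        (Finset.mem_univ i), hφi]
    have hcross : ∑ k, c i k * (φ i - φ k) ^ 2 = ∑ k, c i k * (t - g k) ^ 2 := by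
      refine Finset.sum_congr rfl fun k _ => ?_
      by_cases hk : k = i
      · rw [hk, hdiag i, zero_mul, zero_mul]
      · rw [hφi, hupdate k hk]
    have hcol : ∑ j ∈ e, c j i * (φ j - t) ^ 2 = ∑ j, c i j * (t - g j) ^ 2 := by
      rw [← Finset.sum_erase_add Finset.univ (fun j => c i j * (t - g j) ^ 2)
        (Finset.mem_univ i)]
      rw [show c i i = 0 from hdiag i]
      rw [zero_mul, add_zero]
      refine Finset.sum_congr rfl fun j hj => ?_
      have hj' : j ≠ i := (Finset.mem_erase.1 hj).1
      rw [hupdate j hj', hsymm j i]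
      ring
    have step1 : (∑ j, ∑ k, c j k * (φ j - φ k) ^ 2)
        = (∑ j ∈ e, ∑ k ∈ e, c j k * (φ j - φ k) ^ 2)
          + 2 * ∑ k, c i k * (t - g k) ^ 2 := by
      calc ∑ j, ∑ k, c j k * (φ j - φ k) ^ 2
          = (∑ j ∈ e, ∑ k, c j k * (φ j - φ k) ^ 2)
            + ∑ k, c i k * (φ i - φ k) ^ 2 :=
            (Finset.sum_erase_add Finset.univ
              (fun j => ∑ k, c j k * (φ j - φ k) ^ 2) (Finset.mem_univ i)).symm
        _ = (∑ j ∈ e, ((∑ k ∈ e, c j k * (φ j - φ k) ^ 2) + c j i * (φ j - t) ^ 2))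
            + ∑ k, c i k * (t - g k) ^ 2 := by
            rw [hcross, Finset.sum_congr rfl fun j _ => hrow j]
        _ = ((∑ j ∈ e, ∑ k ∈ e, c j k * (φ j - φ k) ^ 2)
            + ∑ j ∈ e, c j i * (φ j - t) ^ 2) + ∑ k, c i k * (t - g k) ^ 2 := by
            rw [Finset.sum_add_distrib]
        _ = _ := by rw [hcol]; ring
    have step2 : 2 * ∑ k, c i k * (t - g k) ^ 2
        = (1 / (∑ l, c i l)) * ∑ j, ∑ k, c i j * c i k * (g j - g k) ^ 2 := by
      rw [ht]
      exact schur_identity (c i) g hs0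
    have step3 : (∑ j, ∑ k, c i j * c i k * (g j - g k) ^ 2)
        = ∑ j ∈ e, ∑ k ∈ e, c i j * c i k * (φ j - φ k) ^ 2 := by
      rw [← Finset.sum_erase_add Finset.univ
        (fun j => ∑ k, c i j * c i k * (g j - g k) ^ 2) (Finset.mem_univ i)]
      simp only [hdiag i, zero_mul, Finset.sum_const_zero, add_zero]
      refine Finset.sum_congr rfl fun j hj => ?_
      rw [← Finset.sum_erase_add Finset.univ
        (fun k => c i j * c i k * (g j - g k) ^ 2) (Finset.mem_univ i)]
      simp only [hdiag i, mul_zero, zero_mul, add_zero]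
      refine Finset.sum_congr rfl fun k hk => ?_
      rw [hupdate j (Finset.mem_erase.1 hj).1, hupdate k (Finset.mem_erase.1 hk).1]
    have conv1 : ∀ F : V → V → ℝ, (∑ j ∈ e, ∑ k ∈ e, F j k)
        = ∑ j : {v : V // v ≠ i}, ∑ k : {v : V // v ≠ i}, F (j : V) (k : V) := by
      intro F
      rw [Finset.sum_subtype e hmem (fun j => ∑ k ∈ e, F j k)]
      exact Finset.sum_congr rfl fun j _ => Finset.sum_subtype e hmem _
    have hpt : ∀ j k : {v : V // v ≠ i},
        (if (j : V) = (k : V) then (0:ℝ)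
          else c (j : V) (k : V) + c i (j : V) * c i (k : V) / ∑ l, c i l)
            * (ψ j - ψ k) ^ 2
        = c (j : V) (k : V) * (φ (j : V) - φ (k : V)) ^ 2
          + (1 / (∑ l, c i l)) * (c i (j : V) * c i (k : V)
            * (φ (j : V) - φ (k : V)) ^ 2) := by
      intro j k
      by_cases h : (j : V) = (k : V)
      · have hjk : j = k := Subtype.ext h
        subst hjk
        simp [hdiag]
      · rw [if_neg h, hψφ j, hψφ k]
        ring
    have hDD : (∑ j : {v : V // v ≠ i}, ∑ k : {v : V // v ≠ i},
        (if (j : V) = (k : V) then (0:ℝ)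
          else c (j : V) (k : V) + c i (j : V) * c i (k : V) / ∑ l, c i l)
            * (ψ j - ψ k) ^ 2)
        = ∑ j, ∑ k, c j k * (φ j - φ k) ^ 2 := by
      calc (∑ j : {v : V // v ≠ i}, ∑ k : {v : V // v ≠ i},
          (if (j : V) = (k : V) then (0:ℝ)
            else c (j : V) (k : V) + c i (j : V) * c i (k : V) / ∑ l, c i l)
              * (ψ j - ψ k) ^ 2)
          = ∑ j : {v : V // v ≠ i}, ∑ k : {v : V // v ≠ i},
            (c (j : V) (k : V) * (φ (j : V) - φ (k : V)) ^ 2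
              + (1 / (∑ l, c i l)) * (c i (j : V) * c i (k : V)
                * (φ (j : V) - φ (k : V)) ^ 2)) :=
            Finset.sum_congr rfl fun j _ => Finset.sum_congr rfl fun k _ => hpt j k
        _ = ∑ j ∈ e, ∑ k ∈ e, (c j k * (φ j - φ k) ^ 2
              + (1 / (∑ l, c i l)) * (c i j * c i k * (φ j - φ k) ^ 2)) :=
            (conv1 (fun j k => c j k * (φ j - φ k) ^ 2
              + (1 / (∑ l, c i l)) * (c i j * c i k * (φ j - φ k) ^ 2))).symm
        _ = (∑ j ∈ e, ∑ k ∈ e, c j k * (φ j - φ k) ^ 2)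
              + (1 / (∑ l, c i l)) * ∑ j ∈ e, ∑ k ∈ e,
                c i j * c i k * (φ j - φ k) ^ 2 := by
            simp_rw [Finset.sum_add_distrib, Finset.mul_sum]
        _ = (∑ j ∈ e, ∑ k ∈ e, c j k * (φ j - φ k) ^ 2)
              + 2 * ∑ k, c i k * (t - g k) ^ 2 := by
            rw [← step3, ← step2]
        _ = ∑ j, ∑ k, c j k * (φ j - φ k) ^ 2 := step1.symm
    -- variance comparison
    set m : ℝ := (∑ v, φ v) / N with hm
    have hsubpos : (0:ℕ) < Fintype.card {v : V // v ≠ i} := by rw [hcard']; omega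
    have hvar : (N - 1) * uniformVar ψ ≤ N * uniformVar φ := by
      have h1 : (N - 1) * uniformVar ψ
          = ∑ x : {v : V // v ≠ i},
            (ψ x - (∑ y : {v : V // v ≠ i}, ψ y)
              / ((Fintype.card {v : V // v ≠ i} : ℕ) : ℝ)) ^ 2 := by
        rw [← hcastcard]; exact card_mul_var hsubpos ψ
      have h2 : ∑ x : {v : V // v ≠ i},
          (ψ x - (∑ y : {v : V // v ≠ i}, ψ y)
            / ((Fintype.card {v : V // v ≠ i} : ℕ) : ℝ)) ^ 2
          ≤ ∑ x : {v : V // v ≠ i}, (ψ x - m) ^ 2 := sum_sq_min hsubpos ψ m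
      have h3 : (∑ x : {v : V // v ≠ i}, (ψ x - m) ^ 2)
          = ∑ v ∈ e, (φ v - m) ^ 2 := by
        rw [Finset.sum_subtype e hmem (fun v => (φ v - m) ^ 2)]
        exact Finset.sum_congr rfl fun x _ => by rw [hψφ x]
      have h4 : (∑ v ∈ e, (φ v - m) ^ 2) ≤ ∑ v, (φ v - m) ^ 2 :=
        Finset.sum_le_sum_of_subset_of_nonneg (Finset.subset_univ e)
          (fun v _ _ => sq_nonneg _)
      have h5 : (∑ v, (φ v - m) ^ 2) = N * uniformVar φ := by
        rw [hm, hNdef]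
        exact (card_mul_var (by omega) φ).symm
      linarith
    -- assemble
    have hEφ := hE φ
    have hD' : rwDirichlet (fun j k : {v : V // v ≠ i} =>
        if (j : V) = (k : V) then 0
        else c (j : V) (k : V) + c i (j : V) * c i (k : V) / ∑ l, c i l) ψ
        = (1 / (2 * (N - 1))) * ∑ j, ∑ k, c j k * (φ j - φ k) ^ 2 := by
      rw [rwDirichlet, hcastcard, hDD]
    have hDc : rwDirichlet c φ
        = (1 / (2 * N)) * ∑ j, ∑ k, c j k * (φ j - φ k) ^ 2 := rfl
    set D : ℝ := ∑ j, ∑ k, c j k * (φ j - φ k) ^ 2 with hDdef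
    have hNE : N * rwDirichlet c φ = (N - 1) * ((1 / (2 * (N - 1))) * D) := by
      rw [hDc]
      have h1 : (N - 1) ≠ 0 := by linarith
      have h2 : N ≠ 0 := by linarith
      field_simp
    rw [hD']
    have key : (N - 1) * (l * uniformVar ψ) ≤ (N - 1) * ((1 / (2 * (N - 1))) * D) := by
      have h1 : l * ((N - 1) * uniformVar ψ) ≤ l * (N * uniformVar φ) :=
        mul_le_mul_of_nonneg_left hvar hl0
      have h2 : N * (l * uniformVar φ) ≤ N * rwDirichlet c φ :=
        mul_le_mul_of_nonneg_left hEφ (by linarith)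
      nlinarith [h1, h2, hNE]
    have := le_of_mul_le_mul_left key (by linarith : (0:ℝ) < N - 1)
    exact this
end

section
/- (Holroyd–Liggett.) There exists a stationary 1-dependent 4-coloring of ℤ, i.e., a probability measure μ on ℤ → Fin 4 that is stationary, 1-dependent, and a 4-coloring. -/
open MeasureTheory ProbabilityTheory

/-- Configurations: colorings of `ℤ` with `q` colors, with the product σ-algebra. -/
abbrev Config (q : ℕ) : Type := ℤ → Fin q

/-- The left shift on configurations: `shift x n = x (n + 1)`. -/
def shift {q : ℕ} (x : Config q) : Config q := fun n => x (n + 1)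

/-- A measure on configurations is stationary if it is invariant under the shift. -/
def IsStationary' {q : ℕ} (μ : Measure (Config q)) : Prop :=
  μ.map shift = μ

/-- A measure on configurations is a (proper) `q`-coloring if almost surely adjacent
coordinates take different values. -/
def IsColoring {q : ℕ} (μ : Measure (Config q)) : Prop :=
  ∀ᵐ x ∂μ, ∀ n : ℤ, x n ≠ x (n + 1)

/-- The σ-algebra on configurations generated by the coordinates in `A ⊆ ℤ`. -/
def coordSigma (q : ℕ) (A : Set ℤ) : MeasurableSpace (Config q) :=
  ⨆ a ∈ A, MeasurableSpace.comap (fun x : Config q => x a) inferInstance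

/-- A measure on configurations is `k`-dependent if the σ-algebras generated by the
coordinates in any two sets `A, B ⊆ ℤ` with `|a - b| > k` for all `a ∈ A`, `b ∈ B`
are independent. -/
def KDependent {q : ℕ} (k : ℕ) (μ : Measure (Config q)) : Prop :=
  ∀ A B : Set ℤ, (∀ a ∈ A, ∀ b ∈ B, (k : ℤ) < |a - b|) →
    Indep (coordSigma q A) (coordSigma q B) μ


noncomputable section HL4
open Finset

abbrev Word : Type := List (Fin 4)

def Proper (w : Word) : Prop := List.IsChain (· ≠ ·) w

instance : DecidablePred Proper := fun w => by unfold Proper; infer_instance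

def NN (w : Word) : ℕ :=
  if h : w = [] then 1
  else if Proper w then ∑ i : Fin w.length, NN (w.eraseIdx i.1) else 0
termination_by w.length
decreasing_by
  rw [List.length_eraseIdx, if_pos i.isLt]
  have : w.length ≠ 0 := by simpa using h
  omega

lemma NN_nil : NN [] = 1 := by simp [NN]

lemma NN_improper {w : Word} (h : ¬ Proper w) : NN w = 0 := by
  have hne : w ≠ [] := by rintro rfl; exact h List.isChain_nil
  rw [NN]; simp [hne, h]

lemma NN_sum {w : Word} (h0 : w ≠ []) (h : Proper w) :
    NN w = ∑ i ∈ range w.length, NN (w.eraseIdx i) := by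
  rw [NN, dif_neg h0, if_pos h]
  exact Fin.sum_univ_eq_sum_range (fun i => NN (w.eraseIdx i)) w.length

lemma not_proper_clash (x y : Word) (a : Fin 4) : ¬ Proper (x ++ a :: a :: y) := by
  intro h
  exact (List.isChain_cons_cons.mp (List.isChain_append.mp h).2.1).1 rfl

lemma NN_clash (x y : Word) (a : Fin 4) : NN (x ++ a :: a :: y) = 0 :=
  NN_improper (not_proper_clash x y a)

lemma NN_clash' (y : Word) (a : Fin 4) : NN (a :: a :: y) = 0 := by
  simpa using NN_clash ([] : Word) y a

lemma nnA (x y : Word) (a : Fin 4) : NN ((x ++ [a]) ++ a :: y) = 0 := by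
  rw [List.append_assoc, List.singleton_append]; exact NN_clash x y a

lemma NN_single (c : Fin 4) : NN [c] = 1 := by
  rw [NN_sum (by simp) (List.isChain_singleton c)]
  simp [NN_nil]

lemma sum_factor {s : Finset ℕ} {f : ℕ → ℕ} {k c : ℕ} :
    (∑ i ∈ s, 2 * f i * k * c) = 2 * (∑ i ∈ s, f i) * k * c := by
  rw [← Finset.sum_mul, ← Finset.sum_mul, ← Finset.mul_sum]

lemma sum_factor2 {s : Finset ℕ} {f : ℕ → ℕ} {k : ℕ} :
    (∑ i ∈ s, 2 * f i * k) = 2 * (∑ i ∈ s, f i) * k := by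
  rw [← Finset.sum_mul, ← Finset.mul_sum]

theorem key : ∀ (M : ℕ) (u v : Word), u.length + v.length = M →
    ∑ c : Fin 4, NN (u ++ c :: v)
      = 2 * NN u * NN v * Nat.choose (u.length + v.length + 2) (u.length + 1) := by
  intro M
  induction M using Nat.strong_induction_on with
  | _ M IH =>
  intro u v hM
  by_cases hu : Proper u
  swap
  · have h1 : ∀ c : Fin 4, NN (u ++ c :: v) = 0 := fun c =>
      NN_improper (fun h => hu (List.isChain_append.mp h).1)
    simp [h1, NN_improper hu]
  by_cases hv : Proper v
  swap
  · have h1 : ∀ c : Fin 4, NN (u ++ c :: v) = 0 := fun c =>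
      NN_improper (fun h => hv (List.IsChain.tail (List.isChain_append.mp h).2.1))
    simp [h1, NN_improper hv]
  rcases List.eq_nil_or_concat u with rfl | ⟨u', a, rfl⟩
  · rcases v with _ | ⟨b, v'⟩
    · -- base case u = v = []
      simp [NN_single, NN_nil]
    · -- u = [], v = b :: v'
      set v : Word := b :: v' with hvdef
      have hvne : v ≠ [] := by simp [hvdef]
      have point : ∀ c : Fin 4,
          NN (c :: v) + (if c = b then NN v + ∑ j ∈ range v.length, NN (b :: v.eraseIdx j) else 0)
            = NN v + ∑ j ∈ range v.length, NN (c :: v.eraseIdx j) := by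
        intro c
        by_cases hcb : c = b
        · subst hcb
          rw [if_pos rfl, NN_clash' v' c]
          ring
        · rw [if_neg hcb]
          have hpc : Proper (c :: v) := List.isChain_cons_cons.mpr ⟨hcb, hv⟩
          rw [NN_sum (by simp) hpc]
          simp only [List.length_cons]
          rw [Finset.sum_range_succ' (fun i => NN ((c :: v).eraseIdx i)) v.length]
          simp only [List.eraseIdx_cons_succ, List.eraseIdx_cons_zero]
          ring
      have hsum := Finset.sum_congr rfl (fun c (_ : c ∈ (univ : Finset (Fin 4))) => point c)
      rw [Finset.sum_add_distrib, Finset.sum_ite_eq' univ b] at hsum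
      simp only [mem_univ, if_pos] at hsum
      have hbv : ∑ j ∈ range v.length, NN (b :: v.eraseIdx j) = NN v := by
        simp only [hvdef, List.length_cons]
        rw [Finset.sum_range_succ' (fun j => NN (b :: (b :: v').eraseIdx j)) v'.length]
        simp only [List.eraseIdx_cons_succ, List.eraseIdx_cons_zero]
        simp [NN_clash']
      have hinner : ∀ j ∈ range v.length, ∑ c : Fin 4, NN (c :: v.eraseIdx j)
          = 2 * NN (v.eraseIdx j) * (v.length + 1) := by
        intro j hj
        rw [mem_range] at hj
        have hlen : (v.eraseIdx j).length = v.length - 1 := by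
          rw [List.length_eraseIdx, if_pos hj]
        have h2 := IH ((v.eraseIdx j).length) (by omega) ([] : Word) (v.eraseIdx j) (by simp)
        simp only [List.nil_append, List.length_nil, NN_nil, zero_add, Nat.choose_one_right] at h2
        rw [h2, hlen]
        have hL : v.length - 1 + 2 = v.length + 1 := by
          have : v.length ≠ 0 := by simp [hvdef]
          omega
        rw [hL]
      have hswap : ∑ c : Fin 4, ∑ j ∈ range v.length, NN (c :: v.eraseIdx j)
          = 2 * NN v * (v.length + 1) := by
        rw [Finset.sum_comm, Finset.sum_congr rfl hinner, sum_factor2, ← NN_sum hvne hv]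
      rw [Finset.sum_add_distrib, hswap, Finset.sum_const] at hsum
      simp only [card_univ, Fintype.card_fin, smul_eq_mul] at hsum
      rw [hbv] at hsum
      simp only [List.nil_append, List.length_nil, NN_nil, zero_add, Nat.choose_one_right]
      set A := ∑ c : Fin 4, NN (c :: v) with hA
      set X := NN v
      set L := v.length
      have : A = 2 * X + 2 * X * (L + 1) := by omega
      rw [this]; ring
  · -- u nonempty
    rcases v with _ | ⟨b, v'⟩
    · -- v = [], u = u' ++ [a]
        simp only [List.concat_eq_append] at hu hM ⊢
        set u : Word := u' ++ [a] with hudef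
        have hune : u ≠ [] := by simp [hudef]
        have hlast : u.getLast? = some a := by simp [hudef]
        have point : ∀ c : Fin 4,
            NN (u ++ [c]) + (if c = a then NN u + ∑ i ∈ range u.length, NN (u.eraseIdx i ++ [a]) else 0)
              = NN u + ∑ i ∈ range u.length, NN (u.eraseIdx i ++ [c]) := by
          intro c
          by_cases hca : c = a
          · subst hca
            rw [if_pos rfl]
            have h0 : NN (u ++ [c]) = 0 := nnA u' ([] : Word) c
            rw [h0]; ring
          · rw [if_neg hca]
            have hpc : Proper (u ++ [c]) := by
              refine List.isChain_append.mpr ⟨hu, List.isChain_singleton c, ?_⟩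
              intro x hx y hy
              simp only [hlast, Option.mem_def, Option.some.injEq] at hx
              simp only [List.head?_cons, Option.mem_def, Option.some.injEq] at hy
              subst hx; subst hy
              exact fun h => hca h.symm
            rw [NN_sum (by simp) hpc]
            have hL : (u ++ [c]).length = u.length + 1 := by simp
            rw [hL, Finset.sum_range_succ]
            have herase1 : ∀ i ∈ range u.length, NN ((u ++ [c]).eraseIdx i) = NN (u.eraseIdx i ++ [c]) := by
              intro i hi
              rw [mem_range] at hi
              rw [List.eraseIdx_append_of_lt_length hi]
            have herase2 : (u ++ [c]).eraseIdx u.length = u := by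
              rw [List.eraseIdx_append_of_length_le le_rfl]
              simp
            rw [Finset.sum_congr rfl herase1, herase2]
            ring
        have hsum := Finset.sum_congr rfl (fun c (_ : c ∈ (univ : Finset (Fin 4))) => point c)
        rw [Finset.sum_add_distrib, Finset.sum_ite_eq' univ a] at hsum
        simp only [mem_univ, if_pos] at hsum
        have hbu : ∑ i ∈ range u.length, NN (u.eraseIdx i ++ [a]) = NN u := by
          have hL : u.length = u'.length + 1 := by simp [hudef]
          rw [hL, Finset.sum_range_succ]
          have h1 : ∀ i ∈ range u'.length, NN (u.eraseIdx i ++ [a]) = 0 := by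
            intro i hi
            rw [mem_range] at hi
            rw [hudef, List.eraseIdx_append_of_lt_length hi]
            exact nnA _ _ _
          have h2 : u.eraseIdx u'.length = u' := by
            rw [hudef, List.eraseIdx_append_of_length_le le_rfl]
            simp
          rw [Finset.sum_congr rfl h1, h2]
          simp [hudef]
        have hinner : ∀ i ∈ range u.length, ∑ c : Fin 4, NN (u.eraseIdx i ++ [c])
            = 2 * NN (u.eraseIdx i) * (u.length + 1) := by
          intro i hi
          rw [mem_range] at hi
          have hlen : (u.eraseIdx i).length = u.length - 1 := by
            rw [List.length_eraseIdx, if_pos hi]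
          have h2 := IH ((u.eraseIdx i).length) (by omega) (u.eraseIdx i) ([] : Word) (by simp)
          simp only [List.length_nil, NN_nil, add_zero, mul_one] at h2
          have hch : ((u.eraseIdx i).length + 2).choose ((u.eraseIdx i).length + 1)
              = (u.eraseIdx i).length + 2 := Nat.choose_succ_self_right _
          rw [hch] at h2
          rw [h2, hlen]
          have hL0 : u.length ≠ 0 := by simp [hudef]
          have hLL : u.length - 1 + 2 = u.length + 1 := by omega
          rw [hLL]
        have hswap : ∑ c : Fin 4, ∑ i ∈ range u.length, NN (u.eraseIdx i ++ [c])
            = 2 * NN u * (u.length + 1) := by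
          rw [Finset.sum_comm, Finset.sum_congr rfl hinner, sum_factor2, ← NN_sum hune hu]
        rw [Finset.sum_add_distrib, hswap, Finset.sum_const] at hsum
        simp only [card_univ, Fintype.card_fin, smul_eq_mul] at hsum
        rw [hbu] at hsum
        simp only [List.length_nil, NN_nil, add_zero, mul_one]
        have hch : (u.length + 0 + 2).choose (u.length + 1) = u.length + 2 := by
          rw [add_zero]; exact Nat.choose_succ_self_right _
        rw [hch]
        set A := ∑ c : Fin 4, NN (u ++ [c]) with hA
        set X := NN u
        set L := u.length
        have : A = 2 * X + 2 * X * (L + 1) := by omega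
        rw [this]; ring

    · -- main case
      simp only [List.concat_eq_append] at hu hM ⊢
      set u : Word := u' ++ [a] with hudef
      set v : Word := b :: v' with hvdef
      have hune : u ≠ [] := by simp [hudef]
      have hvne : v ≠ [] := by simp [hvdef]
      have hlast : u.getLast? = some a := by simp [hudef]
      have hulen : u.length = u'.length + 1 := by simp [hudef]
      have hvlen : v.length = v'.length + 1 := by simp [hvdef]
      have huv : u ++ v = u' ++ a :: v := by
        rw [hudef, List.append_assoc, List.singleton_append]
      have eU : ∀ i, i < u'.length → u.eraseIdx i = u'.eraseIdx i ++ [a] := fun i hi => by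
        rw [hudef, List.eraseIdx_append_of_lt_length hi]
      have eUlast : u.eraseIdx u'.length = u' := by
        rw [hudef, List.eraseIdx_append_of_length_le le_rfl]; simp
      have point : ∀ c : Fin 4,
          NN (u ++ c :: v) + (if c = a then 2 * NN (u ++ v) else 0)
              + (if c = b then 2 * NN (u ++ v) else 0)
            = (∑ i ∈ range u.length, NN (u.eraseIdx i ++ c :: v)) + NN (u ++ v)
              + (∑ j ∈ range v.length, NN (u ++ c :: v.eraseIdx j)) := by
        intro c
        by_cases hca : c = a
        · subst hca
          rw [if_pos rfl]
          have h0 : NN (u ++ c :: v) = 0 := nnA u' v c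
          have hSi : ∑ i ∈ range u.length, NN (u.eraseIdx i ++ c :: v) = NN (u ++ v) := by
            rw [hulen, Finset.sum_range_succ, eUlast, ← huv]
            have h1 : ∀ i ∈ range u'.length, NN (u.eraseIdx i ++ c :: v) = 0 := by
              intro i hi
              rw [mem_range] at hi
              rw [eU i hi]
              exact nnA _ _ _
            rw [Finset.sum_congr rfl h1]
            simp
          have hSj : ∑ j ∈ range v.length, NN (u ++ c :: v.eraseIdx j) = 0 := by
            refine Finset.sum_eq_zero fun j _ => nnA u' _ c
          rw [h0, hSi, hSj]
          by_cases hcb : c = b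
          · -- c = a = b : NN (u ++ v) = 0
            have huv0 : NN (u ++ v) = 0 := by
              rw [huv, hvdef, ← hcb]
              exact NN_clash u' v' c
            rw [huv0]; simp
          · rw [if_neg hcb]; ring
        · rw [if_neg hca]
          by_cases hcb : c = b
          · subst hcb
            rw [if_pos rfl]
            have h0 : NN (u ++ c :: v) = 0 := by
              rw [hvdef]; exact NN_clash u v' c
            have hSi : ∑ i ∈ range u.length, NN (u.eraseIdx i ++ c :: v) = 0 := by
              refine Finset.sum_eq_zero fun i _ => ?_
              rw [hvdef]; exact NN_clash _ v' c
            have hSj : ∑ j ∈ range v.length, NN (u ++ c :: v.eraseIdx j) = NN (u ++ v) := by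
              rw [hvlen]
              rw [Finset.sum_range_succ' (fun j => NN (u ++ c :: v.eraseIdx j)) v'.length]
              have h1 : ∀ j ∈ range v'.length, NN (u ++ c :: v.eraseIdx (j + 1)) = 0 := by
                intro j hj
                have : v.eraseIdx (j+1) = c :: v'.eraseIdx j := by
                  rw [hvdef, List.eraseIdx_cons_succ]
                rw [this]
                exact NN_clash u _ c
              rw [Finset.sum_congr rfl h1]
              have h2 : v.eraseIdx 0 = v' := by rw [hvdef, List.eraseIdx_cons_zero]
              rw [h2]
              have h3 : u ++ c :: v' = u ++ v := by rw [hvdef]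
              rw [h3]
              simp
            rw [h0, hSi, hSj]
            ring
          · rw [if_neg hcb]
            have hpc : Proper (u ++ c :: v) := by
              refine List.isChain_append.mpr ⟨hu, List.isChain_cons_cons.mpr ⟨hcb, hv⟩, ?_⟩
              intro x hx y hy
              simp only [hlast, Option.mem_def, Option.some.injEq] at hx
              simp only [List.head?_cons, Option.mem_def, Option.some.injEq] at hy
              subst hx; subst hy
              exact fun h => hca h.symm
            rw [NN_sum (by simp) hpc]
            have hL : (u ++ c :: v).length = u.length + (v.length + 1) := by simp
            rw [hL, Finset.sum_range_add]
            have hpart1 : ∀ i ∈ range u.length,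
                NN ((u ++ c :: v).eraseIdx i) = NN (u.eraseIdx i ++ c :: v) := by
              intro i hi
              rw [mem_range] at hi
              rw [List.eraseIdx_append_of_lt_length hi]
            rw [Finset.sum_congr rfl hpart1]
            rw [Finset.sum_range_succ' (fun i => NN ((u ++ c :: v).eraseIdx (u.length + i))) v.length]
            have hpart2 : ∀ j ∈ range v.length,
                NN ((u ++ c :: v).eraseIdx (u.length + (j + 1))) = NN (u ++ c :: v.eraseIdx j) := by
              intro j hj
              rw [List.eraseIdx_append_of_length_le (Nat.le_add_right _ _)]
              have : u.length + (j + 1) - u.length = j + 1 := by omega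
              rw [this, List.eraseIdx_cons_succ]
            rw [Finset.sum_congr rfl hpart2]
            have hpart3 : (u ++ c :: v).eraseIdx (u.length + 0) = u ++ v := by
              rw [add_zero, List.eraseIdx_append_of_length_le le_rfl, Nat.sub_self,
                List.eraseIdx_cons_zero]
            rw [hpart3]
            ring
      have hsum := Finset.sum_congr rfl (fun c (_ : c ∈ (univ : Finset (Fin 4))) => point c)
      rw [Finset.sum_add_distrib, Finset.sum_add_distrib, Finset.sum_ite_eq' univ a,
        Finset.sum_ite_eq' univ b, Finset.sum_add_distrib, Finset.sum_add_distrib,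
        Finset.sum_const] at hsum
      simp only [mem_univ, if_pos, card_univ, Fintype.card_fin, smul_eq_mul] at hsum
      have hIHi : ∑ c : Fin 4, ∑ i ∈ range u.length, NN (u.eraseIdx i ++ c :: v)
          = 2 * NN u * NN v * Nat.choose (u'.length + v.length + 2) (u'.length + 1) := by
        rw [Finset.sum_comm]
        have hin : ∀ i ∈ range u.length, ∑ c : Fin 4, NN (u.eraseIdx i ++ c :: v)
            = 2 * NN (u.eraseIdx i) * NN v * Nat.choose (u'.length + v.length + 2) (u'.length + 1) := by
          intro i hi
          rw [mem_range] at hi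
          have hlen : (u.eraseIdx i).length = u'.length := by
            rw [List.length_eraseIdx, if_pos hi, hulen]
            omega
          have h2 := IH ((u.eraseIdx i).length + v.length) (by omega) (u.eraseIdx i) v rfl
          rw [h2, hlen]
        rw [Finset.sum_congr rfl hin, sum_factor, ← NN_sum hune hu]
      have hIHj : ∑ c : Fin 4, ∑ j ∈ range v.length, NN (u ++ c :: v.eraseIdx j)
          = 2 * NN u * NN v * Nat.choose (u.length + v'.length + 2) (u.length + 1) := by
        rw [Finset.sum_comm]
        have hin : ∀ j ∈ range v.length, ∑ c : Fin 4, NN (u ++ c :: v.eraseIdx j)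
            = 2 * NN u * NN (v.eraseIdx j) * Nat.choose (u.length + v'.length + 2) (u.length + 1) := by
          intro j hj
          rw [mem_range] at hj
          have hlen : (v.eraseIdx j).length = v'.length := by
            rw [List.length_eraseIdx, if_pos hj, hvlen]
            omega
          have h2 := IH (u.length + (v.eraseIdx j).length) (by omega) u (v.eraseIdx j) rfl
          rw [h2, hlen]
        rw [Finset.sum_congr rfl hin]
        have : ∀ j ∈ range v.length, 2 * NN u * NN (v.eraseIdx j)
              * Nat.choose (u.length + v'.length + 2) (u.length + 1)
            = 2 * NN (v.eraseIdx j) * NN u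
              * Nat.choose (u.length + v'.length + 2) (u.length + 1) := by
          intro j _; ring
        rw [Finset.sum_congr rfl this, sum_factor, ← NN_sum hvne hv]
        ring
      rw [hIHi, hIHj] at hsum
      -- final assembly
      set A := ∑ c : Fin 4, NN (u ++ c :: v) with hAdef
      set X := NN (u ++ v)
      set P := 2 * NN u * NN v * Nat.choose (u'.length + v.length + 2) (u'.length + 1) with hP
      set Q := 2 * NN u * NN v * Nat.choose (u.length + v'.length + 2) (u.length + 1) with hQ
      have hAPQ : A = P + Q := by omega
      rw [hAPQ, hP, hQ]
      have h1 : u'.length + v.length + 2 = u.length + v.length + 1 := by omega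
      have h2 : u.length + v'.length + 2 = u.length + v.length + 1 := by omega
      have h3 : u.length + 1 = u'.length + 1 + 1 := by omega
      rw [h1, h2, h3]
      have hpascal : Nat.choose (u.length + v.length + 2) (u'.length + 1 + 1)
          = Nat.choose (u.length + v.length + 1) (u'.length + 1)
            + Nat.choose (u.length + v.length + 1) (u'.length + 1 + 1) := by
        have : u.length + v.length + 2 = (u.length + v.length + 1) + 1 := by omega
        rw [this, Nat.choose_succ_succ]
      rw [hpascal]
      have h4 : u'.length + 1 + 1 = u.length + 1 := by omega
      rw [h4]
      ring



/-- probability of a word -/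
def pr (w : Word) : ℝ := (NN w : ℝ) / (2 ^ w.length * (w.length + 1).factorial)

lemma pr_nil : pr [] = 1 := by simp [pr, NN_nil]

lemma pr_nonneg (w : Word) : 0 ≤ pr w := by
  apply div_nonneg (by positivity)
  positivity

lemma pr_improper {w : Word} (h : ¬ Proper w) : pr w = 0 := by
  simp [pr, NN_improper h]

lemma pr_ins (u v : Word) : (∑ c : Fin 4, pr (u ++ c :: v)) = pr u * pr v := by
  set m := u.length with hm
  set n := v.length with hn
  have hlen : ∀ c : Fin 4, (u ++ c :: v).length = m + n + 1 := fun c => by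
    simp [List.length_append, List.length_cons, hm, hn]; omega
  have hterm : ∀ c : Fin 4, pr (u ++ c :: v)
      = (NN (u ++ c :: v) : ℝ) / (2 ^ (m + n + 1) * (m + n + 1 + 1).factorial) := by
    intro c; rw [pr, hlen c]
  rw [Finset.sum_congr rfl (fun c _ => hterm c), ← Finset.sum_div]
  have hkey : (∑ c : Fin 4, (NN (u ++ c :: v) : ℝ))
      = 2 * NN u * NN v * ((m + n + 2).choose (m + 1)) := by
    exact_mod_cast congrArg (Nat.cast : ℕ → ℝ) (key (m + n) u v rfl)
  rw [hkey]
  have hfacN : (m + n + 2).choose (m + 1) * (n + 1).factorial * (m + 1).factorial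
      = (m + n + 2).factorial := by
    have := Nat.add_choose_mul_factorial_mul_factorial (n + 1) (m + 1)
    have he : n + 1 + (m + 1) = m + n + 2 := by omega
    rw [he] at this
    exact this
  have hfac : ((m + n + 2).choose (m + 1) : ℝ) * (n + 1).factorial * (m + 1).factorial
      = (m + n + 2).factorial := by exact_mod_cast hfacN
  have h2 : (m + n + 1 + 1) = m + n + 2 := by omega
  rw [h2, pr, pr, ← hm, ← hn]
  have hne1 : ((m + 1).factorial : ℝ) ≠ 0 := by positivity
  have hne2 : ((n + 1).factorial : ℝ) ≠ 0 := by positivity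
  have hne3 : ((m + n + 2).factorial : ℝ) ≠ 0 := by positivity
  field_simp
  rw [← hfac]
  ring




lemma pr_cons_sum (v : Word) : (∑ c : Fin 4, pr (c :: v)) = pr v := by
  have := pr_ins ([] : Word) v
  simpa [pr_nil] using this

lemma pr_snoc_sum (u : Word) : (∑ c : Fin 4, pr (u ++ [c])) = pr u := by
  have := pr_ins u ([] : Word)
  simpa [pr_nil] using this

/-- extend a word on the appropriate side for step `n` -/
def extw (n : ℕ) (w : Word) (c : Fin 4) : Word := if n % 2 = 1 then c :: w else w ++ [c]

def strip (n : ℕ) (w : Word) : Word := if n % 2 = 1 then w.tail else w.dropLast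

def colorOf (n : ℕ) (w : Word) : Fin 4 := if n % 2 = 1 then w.headI else w.getLastD 0

lemma strip_extw (n : ℕ) (w : Word) (c : Fin 4) : strip n (extw n w c) = w := by
  unfold strip extw; split <;> simp

lemma color_extw (n : ℕ) (w : Word) (c : Fin 4) : colorOf n (extw n w c) = c := by
  unfold colorOf extw; split <;> simp [List.getLastD_concat]

lemma extw_strip (n : ℕ) (w : Word) (h : w.length = n + 1) :
    extw n (strip n w) (colorOf n w) = w := by
  unfold extw strip colorOf
  split
  · cases w with
    | nil => simp at h
    | cons a t => simp
  · rcases List.eq_nil_or_concat w with rfl | ⟨t, b, rfl⟩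
    · simp at h
    · simp [List.concat_eq_append, List.dropLast_concat, List.getLastD_concat]

lemma extw_length (n : ℕ) (w : Word) (c : Fin 4) : (extw n w c).length = w.length + 1 := by
  unfold extw; split <;> simp

lemma strip_length (n : ℕ) (w : Word) : (strip n w).length = w.length - 1 := by
  unfold strip; split <;> simp

lemma pr_extw_sum (n : ℕ) (w : Word) : (∑ c : Fin 4, pr (extw n w c)) = pr w := by
  unfold extw; split
  · exact pr_cons_sum w
  · exact pr_snoc_sum w

/-- cumulative sums of extension probabilities below a color -/
def cum (n : ℕ) (w : Word) (c : Fin 4) : ℝ :=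
  ∑ c' ∈ Finset.univ.filter (fun c' : Fin 4 => c' < c), pr (extw n w c')

lemma cum_nonneg (n : ℕ) (w : Word) (c : Fin 4) : 0 ≤ cum n w c :=
  Finset.sum_nonneg fun c' _ => pr_nonneg _

lemma cum_zero (n : ℕ) (w : Word) : cum n w 0 = 0 := by
  rw [cum]
  have h : Finset.univ.filter (fun c' : Fin 4 => c' < 0) = ∅ := by decide
  rw [h, Finset.sum_empty]

lemma cum_one (n : ℕ) (w : Word) : cum n w 1 = pr (extw n w 0) := by
  rw [cum]
  have : Finset.univ.filter (fun c' : Fin 4 => c' < 1) = {0} := by decide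
  rw [this, Finset.sum_singleton]

lemma cum_two (n : ℕ) (w : Word) : cum n w 2 = pr (extw n w 0) + pr (extw n w 1) := by
  rw [cum]
  have : Finset.univ.filter (fun c' : Fin 4 => c' < 2) = {0, 1} := by decide
  rw [this]
  rw [Finset.sum_insert (by decide), Finset.sum_singleton]

lemma cum_three (n : ℕ) (w : Word) :
    cum n w 3 = pr (extw n w 0) + pr (extw n w 1) + pr (extw n w 2) := by
  rw [cum]
  have : Finset.univ.filter (fun c' : Fin 4 => c' < 3) = {0, 1, 2} := by decide
  rw [this]
  rw [Finset.sum_insert (by decide), Finset.sum_insert (by decide), Finset.sum_singleton]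
  ring

lemma cum_add (n : ℕ) (w : Word) (c : Fin 4) :
    cum n w c + pr (extw n w c) ≤ pr w := by
  have hsub : insert c (Finset.univ.filter (fun c' : Fin 4 => c' < c)) ⊆ Finset.univ := by
    intro x _; exact mem_univ x
  have hnotmem : c ∉ Finset.univ.filter (fun c' : Fin 4 => c' < c) := by
    simp
  have := Finset.sum_le_sum_of_subset_of_nonneg hsub
    (fun i _ _ => pr_nonneg (extw n w i))
  rw [Finset.sum_insert hnotmem] at this
  rw [← pr_extw_sum n w]
  calc cum n w c + pr (extw n w c) = pr (extw n w c) + cum n w c := by ring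
  _ ≤ ∑ c' : Fin 4, pr (extw n w c') := this

/-- the color picked at step n given current word w, its left endpoint t, and sample x -/
def pick (n : ℕ) (w : Word) (t x : ℝ) : Fin 4 :=
  if x < t + pr (extw n w 0) then 0
  else if x < t + pr (extw n w 0) + pr (extw n w 1) then 1
  else if x < t + pr (extw n w 0) + pr (extw n w 1) + pr (extw n w 2) then 2 else 3

/-- left endpoint of the interval of a word (length must match first argument) -/
def sA : ℕ → Word → ℝ
  | 0, _ => 0
  | (n + 1), w => sA n (strip n w) + cum n (strip n w) (colorOf n w)

lemma sA_extw (n : ℕ) (w : Word) (c : Fin 4) :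
    sA (n + 1) (extw n w c) = sA n w + cum n w c := by
  simp [sA, strip_extw, color_extw]

/-- the word built from sample x after n steps -/
def wordAt (x : ℝ) : ℕ → Word
  | 0 => []
  | (n + 1) => extw n (wordAt x n) (pick n (wordAt x n) (sA n (wordAt x n)) x)

lemma wordAt_length (x : ℝ) (n : ℕ) : (wordAt x n).length = n := by
  induction n with
  | zero => rfl
  | succ n ih => rw [wordAt, extw_length, ih]

lemma pick_mem_iff (n : ℕ) (w : Word) (t x : ℝ) (c : Fin 4) :
    ((t ≤ x ∧ x < t + pr w) ∧ pick n w t x = c) ↔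
      (t + cum n w c ≤ x ∧ x < t + cum n w c + pr (extw n w c)) := by
  have h0 := pr_nonneg (extw n w 0)
  have h1 := pr_nonneg (extw n w 1)
  have h2 := pr_nonneg (extw n w 2)
  have h3 := pr_nonneg (extw n w 3)
  have hsum : pr (extw n w 0) + pr (extw n w 1) + pr (extw n w 2) + pr (extw n w 3) = pr w := by
    rw [← pr_extw_sum n w, Fin.sum_univ_four]
  fin_cases c
  · show ((t ≤ x ∧ x < t + pr w) ∧ pick n w t x = 0) ↔
      (t + cum n w 0 ≤ x ∧ x < t + cum n w 0 + pr (extw n w 0))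
    rw [cum_zero]
    unfold pick
    constructor
    · rintro ⟨⟨ht, hQ⟩, hpick⟩
      split_ifs at hpick with e1 e2 e3
      · exact ⟨by linarith, by linarith⟩
      all_goals simp_all
    · rintro ⟨ht, hlt⟩
      refine ⟨⟨by linarith, by linarith⟩, ?_⟩
      rw [if_pos (by linarith)]
  · show ((t ≤ x ∧ x < t + pr w) ∧ pick n w t x = 1) ↔
      (t + cum n w 1 ≤ x ∧ x < t + cum n w 1 + pr (extw n w 1))
    rw [cum_one]
    unfold pick
    constructor
    · rintro ⟨⟨ht, hQ⟩, hpick⟩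
      split_ifs at hpick with e1 e2 e3
      all_goals first
        | (exact ⟨by linarith, by linarith⟩)
        | simp_all
    · rintro ⟨ht, hlt⟩
      refine ⟨⟨by linarith, by linarith⟩, ?_⟩
      rw [if_neg (by linarith), if_pos (by linarith)]
  · show ((t ≤ x ∧ x < t + pr w) ∧ pick n w t x = 2) ↔
      (t + cum n w 2 ≤ x ∧ x < t + cum n w 2 + pr (extw n w 2))
    rw [cum_two]
    unfold pick
    constructor
    · rintro ⟨⟨ht, hQ⟩, hpick⟩
      split_ifs at hpick with e1 e2 e3
      all_goals first
        | (exact ⟨by linarith, by linarith⟩)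
        | simp_all
    · rintro ⟨ht, hlt⟩
      refine ⟨⟨by linarith, by linarith⟩, ?_⟩
      rw [if_neg (by linarith), if_neg (by linarith), if_pos (by linarith)]
  · show ((t ≤ x ∧ x < t + pr w) ∧ pick n w t x = 3) ↔
      (t + cum n w 3 ≤ x ∧ x < t + cum n w 3 + pr (extw n w 3))
    rw [cum_three]
    unfold pick
    constructor
    · rintro ⟨⟨ht, hQ⟩, hpick⟩
      split_ifs at hpick with e1 e2 e3
      all_goals first
        | (exact ⟨by linarith, by linarith⟩)
        | simp_all
    · rintro ⟨ht, hlt⟩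
      refine ⟨⟨by linarith, by linarith⟩, ?_⟩
      rw [if_neg (by linarith), if_neg (by linarith), if_neg (by linarith)]

lemma interval_iff : ∀ (n : ℕ) (w : Word), w.length = n → ∀ x : ℝ, 0 ≤ x → x < 1 →
    (wordAt x n = w ↔ (sA n w ≤ x ∧ x < sA n w + pr w)) := by
  intro n
  induction n with
  | zero =>
    intro w hw x hx0 hx1
    rw [List.length_eq_zero_iff] at hw
    subst hw
    simp only [wordAt, sA, pr_nil, zero_add]
    exact iff_of_true trivial ⟨hx0, hx1⟩
  | succ n ih =>
    intro w hw x hx0 hx1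
    obtain ⟨c, hcw⟩ : ∃ c, extw n (strip n w) c = w := ⟨colorOf n w, extw_strip n w hw⟩
    set w0 := strip n w with hw0
    have hw0len : w0.length = n := by rw [hw0, strip_length, hw]; omega
    have hstep : wordAt x (n + 1) = w ↔
        (wordAt x n = w0 ∧ pick n w0 (sA n w0) x = c) := by
      constructor
      · intro he
        rw [wordAt] at he
        have h1 : wordAt x n = w0 := by
          have := congrArg (strip n) he
          rwa [strip_extw] at this
        refine ⟨h1, ?_⟩
        rw [h1] at he
        have := congrArg (colorOf n) he
        rw [color_extw] at this
        rw [this, ← hcw, color_extw]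
      · rintro ⟨h1, h2⟩
        rw [wordAt, h1, h2, hcw]
    rw [hstep, ih w0 hw0len x hx0 hx1, pick_mem_iff, ← hcw, sA_extw]

lemma bounds : ∀ (n : ℕ) (w : Word), w.length = n → 0 ≤ sA n w ∧ sA n w + pr w ≤ 1 := by
  intro n
  induction n with
  | zero =>
    intro w hw
    rw [List.length_eq_zero_iff] at hw
    subst hw
    simp [sA, pr_nil]
  | succ n ih =>
    intro w hw
    obtain ⟨c, hcw⟩ : ∃ c, extw n (strip n w) c = w := ⟨colorOf n w, extw_strip n w hw⟩
    set w0 := strip n w with hw0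
    have hw0len : w0.length = n := by rw [hw0, strip_length, hw]; omega
    obtain ⟨hb0, hb1⟩ := ih w0 hw0len
    rw [← hcw, sA_extw]
    constructor
    · have := cum_nonneg n w0 c
      linarith
    · have := cum_add n w0 c
      linarith



lemma wordAt_zero (x : ℝ) : wordAt x 0 = [] := rfl
lemma wordAt_succ (x : ℝ) (n : ℕ) :
    wordAt x (n + 1) = extw n (wordAt x n) (pick n (wordAt x n) (sA n (wordAt x n)) x) := rfl


instance : MeasurableSpace Word := ⊤
instance : MeasurableSingletonClass Word := ⟨fun _ => MeasurableSpace.measurableSet_top⟩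

lemma measurable_word_fun {g : Word → Word} : Measurable g := fun _ _ => MeasurableSpace.measurableSet_top

lemma measurable_pick (n : ℕ) (w : Word) (t : ℝ) : Measurable (fun x => pick n w t x) := by
  unfold pick
  refine Measurable.ite (measurableSet_lt measurable_id measurable_const) measurable_const ?_
  refine Measurable.ite (measurableSet_lt measurable_id measurable_const) measurable_const ?_
  exact Measurable.ite (measurableSet_lt measurable_id measurable_const) measurable_const
    measurable_const

lemma measurable_wordAt (n : ℕ) : Measurable (fun x => wordAt x n) := by
  induction n with
  | zero =>
    have : (fun x => wordAt x 0) = fun _ => ([] : Word) := funext fun x => wordAt_zero x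
    rw [this]; exact measurable_const
  | succ n ih =>
    have heq : (fun x => wordAt x (n + 1))
        = (fun p : ℝ × Word => extw n p.2 (pick n p.2 (sA n p.2) p.1))
          ∘ (fun x => (x, wordAt x n)) := by
      funext x
      simp [wordAt_succ]
    rw [heq]
    refine Measurable.comp ?_ (measurable_id.prodMk ih)
    refine measurable_from_prod_countable_left fun w => ?_
    exact (measurable_from_top (f := fun c : Fin 4 => extw n w c)).comp (measurable_pick n w (sA n w))

def μ0 : Measure ℝ := volume.restrict (Set.Ico (0:ℝ) 1)

instance : IsProbabilityMeasure μ0 := by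
  constructor
  rw [μ0, Measure.restrict_apply MeasurableSet.univ]
  simp [Real.volume_Ico]

lemma meas_fiber (n : ℕ) (w : Word) (hw : w.length = n) :
    μ0 ((fun x => wordAt x n) ⁻¹' {w}) = ENNReal.ofReal (pr w) := by
  rw [μ0, Measure.restrict_apply ((measurable_wordAt n) (measurableSet_singleton w))]
  have hset : (fun x => wordAt x n) ⁻¹' {w} ∩ Set.Ico 0 1
      = Set.Ico (sA n w) (sA n w + pr w) := by
    ext x
    simp only [Set.mem_inter_iff, Set.mem_preimage, Set.mem_singleton_iff, Set.mem_Ico]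
    constructor
    · rintro ⟨hxw, hx0, hx1⟩
      exact (interval_iff n w hw x hx0 hx1).mp hxw
    · rintro ⟨h1, h2⟩
      obtain ⟨hb0, hb1⟩ := bounds n w hw
      have hx0 : (0:ℝ) ≤ x := le_trans hb0 h1
      have hx1 : x < 1 := lt_of_lt_of_le h2 hb1
      exact ⟨(interval_iff n w hw x hx0 hx1).mpr ⟨h1, h2⟩, hx0, hx1⟩
  rw [hset, Real.volume_Ico]
  congr 1
  ring

/-- left end of the window after n steps -/
def lE (n : ℕ) : ℤ := -((n / 2 : ℕ) : ℤ)

/-- the step at which coordinate m is added -/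
def addStep (m : ℤ) : ℕ := if 0 < m then 2 * m.toNat else 2 * (-m).toNat - 1

lemma win {m : ℤ} {n : ℕ} (h : addStep m + 1 ≤ n) : lE n ≤ m ∧ m < lE n + n := by
  unfold addStep at h
  unfold lE
  split_ifs at h <;> omega

lemma win2 {m : ℤ} {n : ℕ} (h1 : lE n ≤ m) (h2 : m < lE n + n) : addStep m + 1 ≤ n := by
  unfold addStep
  unfold lE at h1 h2
  split_ifs <;> omega

lemma lE_succ_odd {n : ℕ} (h : n % 2 = 1) : lE (n + 1) = lE n - 1 := by
  unfold lE; omega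

lemma lE_succ_even {n : ℕ} (h : n % 2 ≠ 1) : lE (n + 1) = lE n := by
  unfold lE; omega

/-- the value of coordinate m read from the word at step n -/
def valAt (x : ℝ) (n : ℕ) (m : ℤ) : Fin 4 := (wordAt x n).getD (m - lE n).toNat 0

lemma stable (x : ℝ) (m : ℤ) : ∀ n : ℕ, addStep m + 1 ≤ n →
    valAt x n m = valAt x (addStep m + 1) m := by
  intro n
  induction n with
  | zero => intro h; omega
  | succ n ih =>
    intro h
    rcases Nat.lt_or_ge (addStep m + 1) (n + 1) with hlt | hge
    · have hn : addStep m + 1 ≤ n := by omega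
      rw [← ih hn]
      obtain ⟨hw1, hw2⟩ := win hn
      unfold valAt
      rw [wordAt_succ]
      unfold extw
      split_ifs with hpar
      · rw [lE_succ_odd hpar]
        have : (m - (lE n - 1)).toNat = (m - lE n).toNat + 1 := by omega
        rw [this, List.getD_cons_succ]
      · rw [lE_succ_even hpar]
        apply List.getD_append
        rw [wordAt_length]
        omega
    · have : addStep m + 1 = n + 1 := by omega
      rw [this]

def FF (x : ℝ) : ℤ → Fin 4 := fun m => valAt x (addStep m + 1) m

lemma FF_eq_valAt (x : ℝ) (m : ℤ) (n : ℕ) (h : addStep m + 1 ≤ n) : FF x m = valAt x n m :=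
  (stable x m n h).symm

lemma measurable_FF : Measurable FF := by
  refine measurable_pi_lambda _ fun m => ?_
  have : (fun x => FF x m) = (fun w : Word => w.getD (m - lE (addStep m + 1)).toNat 0)
      ∘ (fun x => wordAt x (addStep m + 1)) := rfl
  rw [this]
  exact (measurable_from_top).comp (measurable_wordAt _)

/-- interval cylinder -/
def ICyl (s : ℤ) (w : Word) : Set (ℤ → Fin 4) :=
  {f | ∀ i : ℕ, i < w.length → f (s + i) = w.getD i 0}

lemma measurable_ICyl (s : ℤ) (w : Word) : MeasurableSet (ICyl s w) := by
  have : ICyl s w = ⋂ (i : ℕ), ⋂ (_ : i < w.length), {f : ℤ → Fin 4 | f (s + i) = w.getD i 0} := by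
    ext f; simp [ICyl]
  rw [this]
  refine MeasurableSet.iInter fun i => MeasurableSet.iInter fun hi => ?_
  exact (measurable_pi_apply (s + i)) (measurableSet_singleton _)

def μm : Measure (ℤ → Fin 4) := μ0.map FF

instance : IsProbabilityMeasure μm := Measure.isProbabilityMeasure_map measurable_FF.aemeasurable

lemma list_eq_of_getD {l1 l2 : Word} (hl : l1.length = l2.length)
    (h : ∀ i, i < l1.length → l1.getD i 0 = l2.getD i 0) : l1 = l2 := by
  apply List.ext_getElem hl
  intro i h1 h2
  have := h i h1
  rwa [List.getD_eq_getElem l1 0 h1, List.getD_eq_getElem l2 0 (by omega)] at this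

lemma F_window (N : ℕ) (w : Word) (hw : w.length = N) :
    FF ⁻¹' (ICyl (lE N) w) = (fun x => wordAt x N) ⁻¹' {w} := by
  ext x
  simp only [Set.mem_preimage, Set.mem_singleton_iff, ICyl, Set.mem_setOf_eq]
  constructor
  · intro hmem
    apply list_eq_of_getD (by rw [wordAt_length, hw])
    intro i hi
    rw [wordAt_length] at hi
    have hwin : addStep (lE N + i) + 1 ≤ N := win2 (by omega) (by omega)
    have := hmem i (by omega)
    rw [FF_eq_valAt x _ N hwin] at this
    unfold valAt at this
    have harith : (lE N + (i:ℤ) - lE N).toNat = i := by omega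
    rw [harith] at this
    rw [this]
  · intro hww i hi
    rw [hw] at hi
    have hwin : addStep (lE N + i) + 1 ≤ N := win2 (by omega) (by omega)
    rw [FF_eq_valAt x _ N hwin]
    unfold valAt
    have harith : (lE N + (i:ℤ) - lE N).toNat = i := by omega
    rw [harith, hww]

lemma Mwin (N : ℕ) (w : Word) (hw : w.length = N) :
    μm (ICyl (lE N) w) = ENNReal.ofReal (pr w) := by
  rw [μm, Measure.map_apply measurable_FF (measurable_ICyl _ _), F_window N w hw,
    meas_fiber N w hw]

-- partition lemmas
lemma getD_last (w : Word) (c : Fin 4) : (w ++ [c]).getD w.length 0 = c := by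
  rw [List.getD_eq_getElem _ _ (by simp)]
  simp

lemma ICyl_right (s : ℤ) (w : Word) :
    ICyl s w = ⋃ c : Fin 4, ICyl s (w ++ [c]) := by
  ext x
  simp only [Set.mem_iUnion, ICyl, Set.mem_setOf_eq]
  constructor
  · intro h
    refine ⟨x (s + w.length), fun i hi => ?_⟩
    rw [List.length_append, List.length_cons, List.length_nil] at hi
    rcases Nat.lt_or_ge i w.length with h1 | h1
    · rw [List.getD_append _ _ _ _ h1]
      exact h i h1
    · have hieq : i = w.length := by omega
      subst hieq
      exact (getD_last w (x (s + w.length))).symm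
  · rintro ⟨c, hc⟩ i hi
    have := hc i (by simp; omega)
    rwa [List.getD_append _ _ _ _ hi] at this

lemma ICyl_right_disj (s : ℤ) (w : Word) :
    Pairwise (Function.onFun Disjoint fun c : Fin 4 => ICyl s (w ++ [c])) := by
  intro c c' hcc
  simp only [Function.onFun]
  rw [Set.disjoint_left]
  intro x hx hx'
  have h1 := hx w.length (by simp)
  have h2 := hx' w.length (by simp)
  rw [getD_last] at h1 h2
  exact hcc (h1 ▸ h2 ▸ rfl)

lemma mu_right (s : ℤ) (w : Word) :
    μm (ICyl s w) = ∑ c : Fin 4, μm (ICyl s (w ++ [c])) := by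
  rw [ICyl_right s w, measure_iUnion (ICyl_right_disj s w) (fun c => measurable_ICyl _ _),
    tsum_fintype]

lemma ICyl_left (s : ℤ) (w : Word) :
    ICyl s w = ⋃ c : Fin 4, ICyl (s - 1) (c :: w) := by
  ext x
  simp only [Set.mem_iUnion, ICyl, Set.mem_setOf_eq]
  constructor
  · intro h
    refine ⟨x (s - 1), fun i hi => ?_⟩
    rw [List.length_cons] at hi
    rcases i with _ | j
    · simp
    · rw [List.getD_cons_succ]
      have harith : s - 1 + (j + 1 : ℕ) = s + j := by push_cast; ring
      rw [harith]
      exact h j (by omega)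
  · rintro ⟨c, hc⟩ i hi
    have := hc (i + 1) (by simp; omega)
    rw [List.getD_cons_succ] at this
    have harith : s - 1 + ((i:ℕ) + 1 : ℕ) = s + i := by push_cast; ring
    rwa [harith] at this

lemma ICyl_left_disj (s : ℤ) (w : Word) :
    Pairwise (Function.onFun Disjoint fun c : Fin 4 => ICyl (s - 1) (c :: w)) := by
  intro c c' hcc
  simp only [Function.onFun]
  rw [Set.disjoint_left]
  intro x hx hx'
  have h1 := hx 0 (by simp)
  have h2 := hx' 0 (by simp)
  simp only [List.getD_cons_zero] at h1 h2
  exact hcc (h1 ▸ h2 ▸ rfl)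

lemma mu_left (s : ℤ) (w : Word) :
    μm (ICyl s w) = ∑ c : Fin 4, μm (ICyl (s - 1) (c :: w)) := by
  rw [ICyl_left s w, measure_iUnion (ICyl_left_disj s w) (fun c => measurable_ICyl _ _),
    tsum_fintype]

lemma margin_right : ∀ (k : ℕ) (s : ℤ) (w : Word),
    (∀ g : Word, g.length = k → μm (ICyl s (w ++ g)) = ENNReal.ofReal (pr (w ++ g))) →
    μm (ICyl s w) = ENNReal.ofReal (pr w) := by
  intro k
  induction k with
  | zero =>
    intro s w h
    simpa using h ([] : Word) rfl
  | succ k ih =>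
    intro s w h
    rw [mu_right s w]
    have hc : ∀ c : Fin 4, μm (ICyl s (w ++ [c])) = ENNReal.ofReal (pr (w ++ [c])) := by
      intro c
      apply ih s (w ++ [c])
      intro g hg
      rw [List.append_assoc]
      exact h ([c] ++ g) (by simp [hg])
    rw [Finset.sum_congr rfl (fun c _ => hc c),
      ← ENNReal.ofReal_sum_of_nonneg (fun c _ => pr_nonneg _), pr_snoc_sum]

lemma margin_left : ∀ (k : ℕ) (s : ℤ) (w : Word),
    (∀ g : Word, g.length = k → μm (ICyl (s - k) (g ++ w)) = ENNReal.ofReal (pr (g ++ w))) →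
    μm (ICyl s w) = ENNReal.ofReal (pr w) := by
  intro k
  induction k with
  | zero =>
    intro s w h
    simpa using h ([] : Word) rfl
  | succ k ih =>
    intro s w h
    rw [mu_left s w]
    have hc : ∀ c : Fin 4, μm (ICyl (s - 1) (c :: w)) = ENNReal.ofReal (pr (c :: w)) := by
      intro c
      apply ih (s - 1) (c :: w)
      intro g hg
      have h1 : s - 1 - k = s - (k + 1 : ℕ) := by push_cast; ring
      have h2 : g ++ c :: w = (g ++ [c]) ++ w := by simp
      rw [h1, h2]
      exact h (g ++ [c]) (by simp [hg])
    rw [Finset.sum_congr rfl (fun c _ => hc c),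
      ← ENNReal.ofReal_sum_of_nonneg (fun c _ => pr_nonneg _), pr_cons_sum]

theorem Mgen (s : ℤ) (w : Word) : μm (ICyl s w) = ENNReal.ofReal (pr w) := by
  set N : ℕ := 2 * (s.natAbs + w.length + 1) with hN
  have hj : lE N ≤ s := by unfold lE; omega
  set j : ℕ := (s - lE N).toNat with hjdef
  have hjs : s - j = lE N := by omega
  have hk : j + w.length ≤ N := by
    have : lE N = -((N / 2 : ℕ) : ℤ) := rfl
    omega
  set k : ℕ := N - j - w.length with hkdef
  apply margin_right k s w
  intro g hg
  apply margin_left j s (w ++ g)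
  intro f hf
  have hfull : (f ++ (w ++ g)).length = N := by
    simp [hf, hg]
    omega
  have hstart : s - j = lE N := hjs
  rw [show s - (j:ℤ) = lE N from by rw [← hjs, hjdef]]
  exact Mwin N (f ++ (w ++ g)) hfull





/-- finite cylinder -/
def Cyl (S : Finset ℤ) (φ : ℤ → Fin 4) : Set (ℤ → Fin 4) := {f | ∀ i ∈ S, f i = φ i}

lemma measurable_Cyl (S : Finset ℤ) (φ : ℤ → Fin 4) : MeasurableSet (Cyl S φ) := by
  have : Cyl S φ = ⋂ (i : ℤ), ⋂ (_ : i ∈ S), {f : ℤ → Fin 4 | f i = φ i} := by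
    ext f; simp [Cyl]
  rw [this]
  exact MeasurableSet.iInter fun i => MeasurableSet.iInter fun hi =>
    (measurable_pi_apply i) (measurableSet_singleton _)

lemma Cyl_empty (φ : ℤ → Fin 4) : Cyl ∅ φ = Set.univ := by
  ext f; simp [Cyl]

-- E1: partitioning a cylinder by the value of an extra coordinate, intersected with X
lemma E1_set (S : Finset ℤ) (φ : ℤ → Fin 4) {m : ℤ} (hm : m ∉ S) (X : Set (ℤ → Fin 4)) :
    Cyl S φ ∩ X = ⋃ c : Fin 4, (Cyl (insert m S) (Function.update φ m c) ∩ X) := by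
  ext f
  simp only [Set.mem_iUnion, Set.mem_inter_iff, Cyl, Set.mem_setOf_eq]
  constructor
  · rintro ⟨h1, h2⟩
    refine ⟨f m, ⟨?_, h2⟩⟩
    intro i hi
    rcases Finset.mem_insert.mp hi with rfl | hiS
    · rw [Function.update_self]
    · rw [Function.update_of_ne (by rintro rfl; exact hm hiS), h1 i hiS]
  · rintro ⟨c, ⟨h1, h2⟩⟩
    refine ⟨fun i hi => ?_, h2⟩
    have := h1 i (Finset.mem_insert_of_mem hi)
    rwa [Function.update_of_ne (by rintro rfl; exact hm hi)] at this

lemma E1_disj (S : Finset ℤ) (φ : ℤ → Fin 4) {m : ℤ} (hm : m ∉ S) (X : Set (ℤ → Fin 4)) :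
    Pairwise (Function.onFun Disjoint
      fun c : Fin 4 => Cyl (insert m S) (Function.update φ m c) ∩ X) := by
  intro c c' hcc
  simp only [Function.onFun]
  rw [Set.disjoint_left]
  rintro f ⟨h1, _⟩ ⟨h2, _⟩
  have e1 := h1 m (Finset.mem_insert_self m S)
  have e2 := h2 m (Finset.mem_insert_self m S)
  rw [Function.update_self] at e1 e2
  exact hcc (e1 ▸ e2 ▸ rfl)

lemma E1_mu (S : Finset ℤ) (φ : ℤ → Fin 4) {m : ℤ} (hm : m ∉ S) {X : Set (ℤ → Fin 4)}
    (hX : MeasurableSet X) :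
    μm (Cyl S φ ∩ X) = ∑ c : Fin 4, μm (Cyl (insert m S) (Function.update φ m c) ∩ X) := by
  rw [E1_set S φ hm X, measure_iUnion (E1_disj S φ hm X)
    (fun c => ((measurable_Cyl _ _).inter hX)), tsum_fintype]

lemma E1_mu' (S : Finset ℤ) (φ : ℤ → Fin 4) {m : ℤ} (hm : m ∉ S) :
    μm (Cyl S φ) = ∑ c : Fin 4, μm (Cyl (insert m S) (Function.update φ m c)) := by
  have := E1_mu S φ hm MeasurableSet.univ
  simpa [Set.inter_univ] using this

-- interval cylinders as Finset cylinders
lemma Cyl_Icc (a b : ℤ) (L : ℕ) (hL : (L : ℤ) = b + 1 - a) (φ : ℤ → Fin 4) :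
    Cyl (Finset.Icc a b) φ = ICyl a (List.ofFn fun i : Fin L => φ (a + i)) := by
  ext f
  simp only [Cyl, ICyl, Set.mem_setOf_eq, List.length_ofFn, Finset.mem_Icc]
  constructor
  · intro h i hi
    rw [List.getD_eq_getElem _ _ (by simpa using hi), List.getElem_ofFn]
    exact h (a + i) (by omega)
  · intro h i hia
    have hi : (i - a).toNat < L := by omega
    have := h (i - a).toNat hi
    rw [List.getD_eq_getElem _ _ (by simpa using hi), List.getElem_ofFn] at this
    have harith : a + ((i - a).toNat : ℤ) = i := by omega
    rwa [harith] at this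

-- right extension partition (same as sec4's, restated here)
lemma ICyl_right_disj' (s : ℤ) (w : Word) (G : Fin 4 → Set (ℤ → Fin 4)) :
    Pairwise (Function.onFun Disjoint fun c : Fin 4 => ICyl s (w ++ [c]) ∩ G c) := by
  intro c c' hcc
  simp only [Function.onFun]
  rw [Set.disjoint_left]
  rintro f ⟨h1, _⟩ ⟨h2, _⟩
  have e1 := h1 w.length (by simp)
  have e2 := h2 w.length (by simp)
  rw [getD_last] at e1 e2
  exact hcc (e1 ▸ e2 ▸ rfl)

lemma gap_one_set (s : ℤ) (u v : Word) :
    ICyl s u ∩ ICyl (s + u.length + 1) v = ⋃ c : Fin 4, ICyl s (u ++ c :: v) := by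
  ext f
  simp only [Set.mem_iUnion, Set.mem_inter_iff, ICyl, Set.mem_setOf_eq, List.length_append,
    List.length_cons]
  constructor
  · rintro ⟨h1, h2⟩
    refine ⟨f (s + u.length), fun i hi => ?_⟩
    rcases Nat.lt_or_ge i u.length with hlt | hge
    · rw [List.getD_append _ _ _ _ hlt]; exact h1 i hlt
    · rw [List.getD_append_right _ _ _ _ hge]
      rcases Nat.eq_or_lt_of_le hge with heq | hlt2
      · rw [← heq, Nat.sub_self]
        simp [← heq]
      · have hj : i - u.length = (i - u.length - 1) + 1 := by omega
        rw [hj, List.getD_cons_succ]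
        have := h2 (i - u.length - 1) (by omega)
        have harith : s + u.length + 1 + ((i - u.length - 1 : ℕ) : ℤ) = s + (i : ℕ) := by omega
        rwa [harith] at this
  · rintro ⟨c, hc⟩
    constructor
    · intro i hi
      have := hc i (by omega)
      rwa [List.getD_append _ _ _ _ hi] at this
    · intro j hj
      have := hc (u.length + 1 + j) (by omega)
      rw [List.getD_append_right _ _ _ _ (by omega)] at this
      have h1 : u.length + 1 + j - u.length = j + 1 := by omega
      rw [h1, List.getD_cons_succ] at this
      have harith : s + ((u.length + 1 + j : ℕ) : ℤ) = s + u.length + 1 + (j : ℤ) := by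
        push_cast; ring
      rwa [harith] at this

lemma ICyl_mid_disj (s : ℤ) (u v : Word) :
    Pairwise (Function.onFun Disjoint fun c : Fin 4 => ICyl s (u ++ c :: v)) := by
  intro c c' hcc
  simp only [Function.onFun]
  rw [Set.disjoint_left]
  intro f h1 h2
  have e1 := h1 u.length (by simp)
  have e2 := h2 u.length (by simp)
  rw [List.getD_append_right _ _ _ _ le_rfl, Nat.sub_self, List.getD_cons_zero] at e1 e2
  exact hcc (e1 ▸ e2 ▸ rfl)

lemma GAP : ∀ (g : ℕ) (s t : ℤ) (u v : Word), t = s + u.length + 1 + g →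
    μm (ICyl s u ∩ ICyl t v) = ENNReal.ofReal (pr u) * ENNReal.ofReal (pr v) := by
  intro g
  induction g with
  | zero =>
    intro s t u v ht
    have ht' : t = s + u.length + 1 := by omega
    subst ht'
    rw [gap_one_set s u v, measure_iUnion (ICyl_mid_disj s u v)
      (fun c => measurable_ICyl _ _), tsum_fintype]
    rw [Finset.sum_congr rfl (fun c _ => Mgen s (u ++ c :: v)),
      ← ENNReal.ofReal_sum_of_nonneg (fun c _ => pr_nonneg _), pr_ins,
      ENNReal.ofReal_mul (pr_nonneg u)]
  | succ g ih =>
    intro s t u v ht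
    rw [ICyl_right s u, Set.iUnion_inter]
    rw [measure_iUnion (ICyl_right_disj' s u _) (fun c => (measurable_ICyl _ _).inter
      (measurable_ICyl _ _)), tsum_fintype]
    have hstep : ∀ c : Fin 4, μm (ICyl s (u ++ [c]) ∩ ICyl t v)
        = ENNReal.ofReal (pr (u ++ [c])) * ENNReal.ofReal (pr v) := by
      intro c
      apply ih s t (u ++ [c]) v
      rw [List.length_append, List.length_cons, List.length_nil]
      push_cast
      omega
    rw [Finset.sum_congr rfl (fun c _ => hstep c), ← Finset.sum_mul,
      ← ENNReal.ofReal_sum_of_nonneg (fun c _ => pr_nonneg _), pr_snoc_sum]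

/-- number of holes in the hull of S -/
def gapC (S : Finset ℤ) : ℕ :=
  if h : S.Nonempty then ((Finset.Icc (S.min' h) (S.max' h)) \ S).card else 0

lemma gapC_insert {S : Finset ℤ} (h : S.Nonempty) {m : ℤ}
    (hm : m ∈ (Finset.Icc (S.min' h) (S.max' h)) \ S) :
    gapC (insert m S) + 1 = gapC S := by
  obtain ⟨hmIcc, hmS⟩ := Finset.mem_sdiff.mp hm
  obtain ⟨hmin, hmax⟩ := Finset.mem_Icc.mp hmIcc
  have h' : (insert m S).Nonempty := Finset.insert_nonempty m S
  have hmin' : (insert m S).min' h' = S.min' h := by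
    apply le_antisymm
    · exact Finset.min'_le _ _ (Finset.mem_insert_of_mem (S.min'_mem h))
    · apply Finset.le_min'
      intro y hy
      rcases Finset.mem_insert.mp hy with rfl | hyS
      · exact hmin
      · exact Finset.min'_le _ _ hyS
  have hmax' : (insert m S).max' h' = S.max' h := by
    apply le_antisymm
    · apply Finset.max'_le
      intro y hy
      rcases Finset.mem_insert.mp hy with rfl | hyS
      · exact hmax
      · exact Finset.le_max' _ _ hyS
    · exact Finset.le_max' _ _ (Finset.mem_insert_of_mem (S.max'_mem h))
  have hsd : (Finset.Icc ((insert m S).min' h') ((insert m S).max' h')) \ insert m S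
      = ((Finset.Icc (S.min' h) (S.max' h)) \ S).erase m := by
    rw [hmin', hmax']
    ext x
    simp only [Finset.mem_sdiff, Finset.mem_erase, Finset.mem_insert, Finset.mem_Icc]
    constructor
    · rintro ⟨hx1, hx2⟩
      push_neg at hx2
      exact ⟨hx2.1, hx1, hx2.2⟩
    · rintro ⟨hx1, hx2, hx3⟩
      exact ⟨hx2, by push_neg; exact ⟨hx1, hx3⟩⟩
  have hcardpos : 0 < ((Finset.Icc (S.min' h) (S.max' h)) \ S).card :=
    Finset.card_pos.mpr ⟨m, hm⟩
  rw [gapC, dif_pos h', hsd, Finset.card_erase_of_mem hm, gapC, dif_pos h]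
  omega

lemma gapC_zero_interval {S : Finset ℤ} (h : S.Nonempty) (hg : gapC S = 0) :
    S = Finset.Icc (S.min' h) (S.max' h) := by
  apply Finset.Subset.antisymm
  · intro x hx
    exact Finset.mem_Icc.mpr ⟨Finset.min'_le _ _ hx, Finset.le_max' _ _ hx⟩
  · rw [gapC, dif_pos h, Finset.card_eq_zero] at hg
    exact Finset.sdiff_eq_empty_iff_subset.mp hg

lemma SPLIT : ∀ (k : ℕ) (S T : Finset ℤ) (φ ψ : ℤ → Fin 4),
    gapC S + gapC T = k → (∀ a ∈ S, ∀ b ∈ T, a + 2 ≤ b) →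
    μm (Cyl S φ ∩ Cyl T ψ) = μm (Cyl S φ) * μm (Cyl T ψ) := by
  intro k
  induction k using Nat.strong_induction_on with
  | _ k IH =>
  intro S T φ ψ hk hsep
  rcases S.eq_empty_or_nonempty with rfl | hS
  · rw [Cyl_empty, Set.univ_inter, measure_univ, one_mul]
  rcases T.eq_empty_or_nonempty with rfl | hT
  · rw [Cyl_empty, Set.inter_univ, measure_univ, mul_one]
  by_cases hgS : gapC S = 0
  · by_cases hgT : gapC T = 0
    · -- both are intervals
      obtain ⟨a1, ha1⟩ : ∃ a, S.min' hS = a := ⟨_, rfl⟩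
      obtain ⟨b1, hb1⟩ : ∃ b, S.max' hS = b := ⟨_, rfl⟩
      obtain ⟨a2, ha2⟩ : ∃ a, T.min' hT = a := ⟨_, rfl⟩
      obtain ⟨b2, hb2⟩ : ∃ b, T.max' hT = b := ⟨_, rfl⟩
      have hSI : S = Finset.Icc a1 b1 := by
        rw [← ha1, ← hb1]; exact gapC_zero_interval hS hgS
      have hTI : T = Finset.Icc a2 b2 := by
        rw [← ha2, ← hb2]; exact gapC_zero_interval hT hgT
      have hab1 : a1 ≤ b1 := by rw [← ha1, ← hb1]; exact S.min'_le _ (S.max'_mem hS)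
      have hab2 : a2 ≤ b2 := by rw [← ha2, ← hb2]; exact T.min'_le _ (T.max'_mem hT)
      have hord : b1 + 2 ≤ a2 := by
        have hb1S : b1 ∈ S := by rw [← hb1]; exact S.max'_mem hS
        have ha2T : a2 ∈ T := by rw [← ha2]; exact T.min'_mem hT
        exact hsep b1 hb1S a2 ha2T
      set L1 := (b1 + 1 - a1).toNat with hL1
      set L2 := (b2 + 1 - a2).toNat with hL2
      have e1 : Cyl S φ = ICyl a1 (List.ofFn fun i : Fin L1 => φ (a1 + i)) := by
        rw [hSI]; exact Cyl_Icc a1 b1 L1 (by omega) φ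
      have e2 : Cyl T ψ = ICyl a2 (List.ofFn fun i : Fin L2 => ψ (a2 + i)) := by
        rw [hTI]; exact Cyl_Icc a2 b2 L2 (by omega) ψ
      rw [e1, e2, Mgen, Mgen]
      apply GAP ((a2 - b1 - 2).toNat) a1 a2
      rw [List.length_ofFn]
      omega
    · -- T has a hole
      have hTpos : 0 < gapC T := Nat.pos_of_ne_zero hgT
      have hcard : (((Finset.Icc (T.min' hT) (T.max' hT)) \ T)).Nonempty := by
        rw [← Finset.card_pos]
        rw [gapC, dif_pos hT] at hTpos
        exact hTpos
      obtain ⟨m, hm⟩ := hcard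
      have hmT : m ∉ T := (Finset.mem_sdiff.mp hm).2
      have hmIcc := (Finset.mem_sdiff.mp hm).1
      have key1 : μm (Cyl S φ ∩ Cyl T ψ) = ∑ c : Fin 4,
          μm (Cyl S φ ∩ Cyl (insert m T) (Function.update ψ m c)) := by
        rw [Set.inter_comm, E1_mu T ψ hmT (measurable_Cyl S φ)]
        exact Finset.sum_congr rfl fun c _ => by rw [Set.inter_comm]
      have hsep' : ∀ a ∈ S, ∀ b ∈ insert m T, a + 2 ≤ b := by
        intro a ha b hb
        rcases Finset.mem_insert.mp hb with rfl | hbT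
        · have h1 := hsep a ha (T.min' hT) (T.min'_mem hT)
          have h2 := (Finset.mem_Icc.mp hmIcc).1
          omega
        · exact hsep a ha b hbT
      have hgap := gapC_insert hT hm
      rw [key1]
      have hrec : ∀ c : Fin 4, μm (Cyl S φ ∩ Cyl (insert m T) (Function.update ψ m c))
          = μm (Cyl S φ) * μm (Cyl (insert m T) (Function.update ψ m c)) :=
        fun c => IH (gapC S + gapC (insert m T)) (by omega) S (insert m T) φ _ rfl hsep'
      rw [Finset.sum_congr rfl (fun c _ => hrec c), ← Finset.mul_sum, ← E1_mu' T ψ hmT]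
  · -- S has a hole
    have hSpos : 0 < gapC S := Nat.pos_of_ne_zero hgS
    have hcard : (((Finset.Icc (S.min' hS) (S.max' hS)) \ S)).Nonempty := by
      rw [← Finset.card_pos]
      rw [gapC, dif_pos hS] at hSpos
      exact hSpos
    obtain ⟨m, hm⟩ := hcard
    have hmS : m ∉ S := (Finset.mem_sdiff.mp hm).2
    have hmIcc := (Finset.mem_sdiff.mp hm).1
    have hsep' : ∀ a ∈ insert m S, ∀ b ∈ T, a + 2 ≤ b := by
      intro a ha b hb
      rcases Finset.mem_insert.mp ha with rfl | haS
      · have h1 := hsep (S.max' hS) (S.max'_mem hS) b hb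
        have h2 := (Finset.mem_Icc.mp hmIcc).2
        omega
      · exact hsep a haS b hb
    have hgap := gapC_insert hS hm
    rw [E1_mu S φ hmS (measurable_Cyl T ψ)]
    have hrec : ∀ c : Fin 4, μm (Cyl (insert m S) (Function.update φ m c) ∩ Cyl T ψ)
        = μm (Cyl (insert m S) (Function.update φ m c)) * μm (Cyl T ψ) :=
      fun c => IH (gapC (insert m S) + gapC T) (by omega) (insert m S) T _ ψ rfl hsep'
    rw [Finset.sum_congr rfl (fun c _ => hrec c), ← Finset.sum_mul, ← E1_mu' S φ hmS]

lemma absdich {x y : ℤ} (h : 2 ≤ |x - y|) : y ≤ x - 2 ∨ x + 2 ≤ y := by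
  rcases abs_cases (x - y) with ⟨he, _⟩ | ⟨he, _⟩ <;> omega

lemma PROD : ∀ (k : ℕ) (S T : Finset ℤ) (φ ψ : ℤ → Fin 4), S.card + T.card = k →
    (∀ a ∈ S, ∀ b ∈ T, 2 ≤ |a - b|) →
    μm (Cyl S φ ∩ Cyl T ψ) = μm (Cyl S φ) * μm (Cyl T ψ) := by
  intro k
  induction k using Nat.strong_induction_on with
  | _ k IH =>
  have core : ∀ (S T : Finset ℤ) (φ ψ : ℤ → Fin 4), S.card + T.card = k →
      (∀ a ∈ S, ∀ b ∈ T, 2 ≤ |a - b|) → ∀ (hS : S.Nonempty) (hT : T.Nonempty),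
      S.max' hS < T.max' hT → μm (Cyl S φ ∩ Cyl T ψ) = μm (Cyl S φ) * μm (Cyl T ψ) := by
    intro S T φ ψ hk hsep hS hT hlt
    classical
    obtain ⟨MS, hMS⟩ : ∃ x, S.max' hS = x := ⟨_, rfl⟩
    have hSle : ∀ a ∈ S, a ≤ MS := fun a ha => hMS ▸ Finset.le_max' _ _ ha
    set T₁ := T.filter (fun b => b ≤ MS) with hT1
    set T₂ := T.filter (fun b => ¬ b ≤ MS) with hT2
    have hdichT : ∀ b ∈ T, b ≤ MS - 2 ∨ MS + 2 ≤ b := by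
      intro b hb
      have := hsep MS (hMS ▸ S.max'_mem hS) b hb
      exact absdich this
    have hT2mem : T.max' hT ∈ T₂ := by
      rw [hT2, Finset.mem_filter]
      refine ⟨T.max'_mem hT, by omega⟩
    have hT1T : T₁ ⊂ T := by
      refine ⟨Finset.filter_subset _ _, fun hsub => ?_⟩
      have := hsub (T.max'_mem hT)
      rw [hT1, Finset.mem_filter] at this
      rw [hT2, Finset.mem_filter] at hT2mem
      exact hT2mem.2 this.2
    have hST : ∀ i ∈ T, i ∉ S := by
      intro i hiT hiS
      have := hsep i hiS i hiT
      simp at this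
    set χ : ℤ → Fin 4 := fun i => if i ∈ S then φ i else ψ i with hχ
    have hχS : ∀ i ∈ S, χ i = φ i := by
      intro i hi
      simp only [hχ]
      rw [if_pos hi]
    have hχn : ∀ i, i ∉ S → χ i = ψ i := by
      intro i hi
      simp only [hχ]
      rw [if_neg hi]
    have hCylT : Cyl T ψ = Cyl T₁ ψ ∩ Cyl T₂ ψ := by
      ext f
      simp only [Cyl, Set.mem_setOf_eq, Set.mem_inter_iff, hT1, hT2, Finset.mem_filter]
      constructor
      · intro h
        exact ⟨fun i hi => h i hi.1, fun i hi => h i hi.1⟩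
      · rintro ⟨h1, h2⟩ i hi
        by_cases hle : i ≤ MS
        · exact h1 i ⟨hi, hle⟩
        · exact h2 i ⟨hi, hle⟩
    have hSU : Cyl S φ ∩ Cyl T₁ ψ = Cyl (S ∪ T₁) χ := by
      ext f
      simp only [Cyl, Set.mem_setOf_eq, Set.mem_inter_iff, Finset.mem_union]
      constructor
      · rintro ⟨h1, h2⟩ i hi
        rcases hi with hiS | hiT1
        · rw [hχS i hiS]; exact h1 i hiS
        · rw [hχn i (hST i (Finset.mem_of_mem_filter i hiT1))]
          exact h2 i hiT1
      · intro h
        constructor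
        · intro i hi
          have := h i (Or.inl hi)
          rwa [hχS i hi] at this
        · intro i hi
          have := h i (Or.inr hi)
          rwa [hχn i (hST i (Finset.mem_of_mem_filter i hi))] at this
    have hsepsplit : ∀ a ∈ S ∪ T₁, ∀ b ∈ T₂, a + 2 ≤ b := by
      intro a ha b hb
      rw [hT2, Finset.mem_filter] at hb
      have hb2 : MS + 2 ≤ b := by
        rcases hdichT b hb.1 with h | h
        · omega
        · exact h
      rcases Finset.mem_union.mp ha with haS | haT1
      · have := hSle a haS; omega
      · rw [hT1, Finset.mem_filter] at haT1
        omega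
    have hsepT12 : ∀ a ∈ T₁, ∀ b ∈ T₂, a + 2 ≤ b := by
      intro a ha b hb
      rw [hT1, Finset.mem_filter] at ha
      rw [hT2, Finset.mem_filter] at hb
      have h1 : a ≤ MS - 2 := by
        rcases hdichT a ha.1 with h | h
        · exact h
        · omega
      have h2 : MS + 2 ≤ b := by
        rcases hdichT b hb.1 with h | h
        · omega
        · exact h
      omega
    have step1 : μm (Cyl S φ ∩ Cyl T ψ) = μm (Cyl (S ∪ T₁) χ ∩ Cyl T₂ ψ) := by
      rw [hCylT, ← Set.inter_assoc, hSU]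
    have step2 : μm (Cyl (S ∪ T₁) χ ∩ Cyl T₂ ψ)
        = μm (Cyl (S ∪ T₁) χ) * μm (Cyl T₂ ψ) :=
      SPLIT _ (S ∪ T₁) T₂ χ ψ rfl hsepsplit
    have step3 : μm (Cyl (S ∪ T₁) χ) = μm (Cyl S φ) * μm (Cyl T₁ ψ) := by
      rw [← hSU]
      refine IH (S.card + T₁.card) ?_ S T₁ φ ψ rfl ?_
      · have := Finset.card_lt_card hT1T
        omega
      · intro a ha b hb
        exact hsep a ha b (Finset.mem_of_mem_filter b hb)
    have step4 : μm (Cyl T ψ) = μm (Cyl T₁ ψ) * μm (Cyl T₂ ψ) := by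
      rw [hCylT]
      exact SPLIT _ T₁ T₂ ψ ψ rfl hsepT12
    rw [step1, step2, step3, step4]
    ring
  intro S T φ ψ hk hsep
  rcases S.eq_empty_or_nonempty with rfl | hS
  · rw [Cyl_empty, Set.univ_inter, measure_univ, one_mul]
  rcases T.eq_empty_or_nonempty with rfl | hT
  · rw [Cyl_empty, Set.inter_univ, measure_univ, mul_one]
  have hMM : S.max' hS ≠ T.max' hT := by
    intro he
    have := hsep _ (S.max'_mem hS) _ (T.max'_mem hT)
    rw [he] at this
    simp at this
  rcases lt_or_gt_of_ne hMM with hlt | hgt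
  · exact core S T φ ψ hk hsep hS hT hlt
  · rw [Set.inter_comm, mul_comm]
    exact core T S ψ φ (by omega) (fun a ha b hb => by
      rw [abs_sub_comm]; exact hsep b hb a ha) hT hS hgt

lemma SHIFT : ∀ (k : ℕ) (S : Finset ℤ) (φ : ℤ → Fin 4), gapC S = k →
    μm (Cyl (S.image (· + 1)) (fun i => φ (i - 1))) = μm (Cyl S φ) := by
  intro k
  induction k using Nat.strong_induction_on with
  | _ k IH =>
  intro S φ hk
  rcases S.eq_empty_or_nonempty with rfl | hS
  · simp [Cyl_empty]
  by_cases hg : gapC S = 0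
  · obtain ⟨a, ha⟩ : ∃ a, S.min' hS = a := ⟨_, rfl⟩
    obtain ⟨b, hb⟩ : ∃ b, S.max' hS = b := ⟨_, rfl⟩
    have hSI : S = Finset.Icc a b := by rw [← ha, ← hb]; exact gapC_zero_interval hS hg
    have hab : a ≤ b := by rw [← ha, ← hb]; exact S.min'_le _ (S.max'_mem hS)
    set L := (b + 1 - a).toNat with hL
    have hLZ : (L : ℤ) = b + 1 - a := by omega
    have himg : (Finset.Icc a b).image (· + 1) = Finset.Icc (a + 1) (b + 1) := by
      ext x
      simp only [Finset.mem_image, Finset.mem_Icc]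
      constructor
      · rintro ⟨y, hy, rfl⟩; omega
      · intro hx; exact ⟨x - 1, by omega, by omega⟩
    rw [hSI, himg, Cyl_Icc (a + 1) (b + 1) L (by omega), Cyl_Icc a b L hLZ, Mgen, Mgen]
    congr 2
    exact congrArg List.ofFn (funext fun i => congrArg φ (by ring))
  · have hpos : 0 < gapC S := Nat.pos_of_ne_zero hg
    have hcard : (((Finset.Icc (S.min' hS) (S.max' hS)) \ S)).Nonempty := by
      rw [← Finset.card_pos]
      rw [gapC, dif_pos hS] at hpos
      exact hpos
    obtain ⟨m, hm⟩ := hcard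
    have hmS : m ∉ S := (Finset.mem_sdiff.mp hm).2
    have him : (m + 1) ∉ S.image (· + 1) := by
      simp only [Finset.mem_image]
      rintro ⟨x, hx, hxe⟩
      have : x = m := by omega
      exact hmS (this ▸ hx)
    have hgap := gapC_insert hS hm
    rw [E1_mu' (S.image (· + 1)) _ him, E1_mu' S φ hmS]
    apply Finset.sum_congr rfl
    intro c _
    have h1 : insert (m + 1) (S.image (· + 1)) = (insert m S).image (· + 1) := by
      rw [Finset.image_insert]
    have h2 : Function.update (fun i => φ (i - 1)) (m + 1) c
        = fun i => (Function.update φ m c) (i - 1) := by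
      funext i
      rw [Function.update_apply, Function.update_apply]
      by_cases hi : i = m + 1
      · rw [if_pos hi, if_pos (by omega)]
      · rw [if_neg hi, if_neg (by omega)]
    rw [h1, h2]
    exact IH (gapC (insert m S)) (by omega) (insert m S) _ rfl





/-- the collection of finite cylinders with coordinates in A -/
def CylSets (A : Set ℤ) : Set (Set (Config 4)) :=
  {t | ∃ S : Finset ℤ, ∃ φ : ℤ → Fin 4, ↑S ⊆ A ∧ t = Cyl S φ}

lemma pisys (A : Set ℤ) : IsPiSystem (CylSets A) := by
  rintro _ ⟨S, φ, hSA, rfl⟩ _ ⟨T, ψ, hTA, rfl⟩ hne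
  obtain ⟨f, hf1, hf2⟩ := hne
  refine ⟨S ∪ T, f, ?_, ?_⟩
  · rw [Finset.coe_union]
    exact Set.union_subset hSA hTA
  · ext g
    simp only [Cyl, Set.mem_inter_iff, Set.mem_setOf_eq, Finset.mem_union]
    constructor
    · rintro ⟨h1, h2⟩ i hi
      rcases hi with hi | hi
      · rw [h1 i hi, ← hf1 i hi]
      · rw [h2 i hi, ← hf2 i hi]
    · intro h
      exact ⟨fun i hi => (h i (Or.inl hi)).trans (hf1 i hi),
        fun i hi => (h i (Or.inr hi)).trans (hf2 i hi)⟩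

lemma coordSigma_le (A : Set ℤ) :
    coordSigma 4 A ≤ (inferInstance : MeasurableSpace (Config 4)) := by
  rw [coordSigma]
  exact iSup₂_le fun a _ => (measurable_pi_apply a).comap_le

lemma gen (A : Set ℤ) : coordSigma 4 A = MeasurableSpace.generateFrom (CylSets A) := by
  apply le_antisymm
  · rw [coordSigma]
    apply iSup₂_le
    intro a ha s hs
    obtain ⟨t, -, rfl⟩ := hs
    have hst : (fun x : Config 4 => x a) ⁻¹' t = ⋃ c ∈ t, Cyl {a} (fun _ => c) := by
      ext f
      simp only [Set.mem_preimage, Set.mem_iUnion, Cyl, Set.mem_setOf_eq,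
        Finset.mem_singleton]
      constructor
      · intro h
        exact ⟨f a, h, fun i hi => by rw [hi]⟩
      · rintro ⟨c, hc, hfc⟩
        have := hfc a rfl
        rwa [this]
    rw [hst]
    refine MeasurableSet.biUnion t.to_countable fun c _ => ?_
    exact MeasurableSpace.measurableSet_generateFrom
      ⟨{a}, fun _ => c, by simpa using ha, rfl⟩
  · apply MeasurableSpace.generateFrom_le
    rintro t ⟨S, φ, hSA, rfl⟩
    have hsplit : Cyl S φ = ⋂ i ∈ (S : Set ℤ), (fun x : Config 4 => x i) ⁻¹' {φ i} := by
      ext f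
      simp [Cyl]
    rw [hsplit]
    refine MeasurableSet.biInter (S : Set ℤ).to_countable fun i hi => ?_
    have hle : MeasurableSpace.comap (fun x : Config 4 => x i) inferInstance
        ≤ coordSigma 4 A := by
      rw [coordSigma]
      exact le_iSup₂ (f := fun a (_ : a ∈ A) =>
        MeasurableSpace.comap (fun x : Config 4 => x a) inferInstance) i (hSA hi)
    exact hle _ ⟨{φ i}, measurableSet_singleton _, rfl⟩

lemma ambient_gen :
    (MeasurableSpace.pi : MeasurableSpace (Config 4))
      = MeasurableSpace.generateFrom (CylSets Set.univ) := by
  rw [← gen Set.univ, coordSigma]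
  simp only [Set.mem_univ, iSup_pos, iSup_univ]
  rfl

lemma measurable_shift : Measurable (shift (q := 4)) :=
  measurable_pi_lambda _ fun n => measurable_pi_apply (n + 1)

lemma shift_preimage (S : Finset ℤ) (φ : ℤ → Fin 4) :
    shift (q := 4) ⁻¹' (Cyl S φ) = Cyl (S.image (· + 1)) (fun i => φ (i - 1)) := by
  ext f
  simp only [Set.mem_preimage, Cyl, Set.mem_setOf_eq, shift]
  constructor
  · intro h j hj
    obtain ⟨i, hi, rfl⟩ := Finset.mem_image.mp hj
    have : i + 1 - 1 = i := by ring
    rw [this]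
    exact h i hi
  · intro h i hi
    have := h (i + 1) (Finset.mem_image_of_mem _ hi)
    have h2 : i + 1 - 1 = i := by ring
    rwa [h2] at this

theorem main_stationary : IsStationary' μm := by
  rw [IsStationary']
  refine ext_of_generate_finite (CylSets Set.univ) ?_ (pisys Set.univ) ?_ ?_
  · exact ambient_gen
  · rintro s ⟨S, φ, -, rfl⟩
    rw [Measure.map_apply measurable_shift (measurable_Cyl S φ), shift_preimage]
    exact SHIFT (gapC S) S φ rfl
  · rw [Measure.map_apply measurable_shift MeasurableSet.univ]
    simp

theorem main_kdep : KDependent 1 μm := by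
  intro A B hAB
  have hind : ProbabilityTheory.IndepSets (CylSets A) (CylSets B) μm := by
    rw [ProbabilityTheory.IndepSets_iff]
    rintro t1 t2 ⟨S, φ, hSA, rfl⟩ ⟨T, ψ, hTB, rfl⟩
    refine PROD (S.card + T.card) S T φ ψ rfl ?_
    intro a ha b hb
    have h := hAB a (hSA ha) b (hTB hb)
    push_cast at h
    omega
  exact ProbabilityTheory.IndepSets.indep (coordSigma_le A) (coordSigma_le B)
    (pisys A) (pisys B) (gen A) (gen B) hind

theorem main_coloring : IsColoring μm := by
  have hnull : ∀ (n : ℤ) (c : Fin 4), μm (ICyl n ([c, c] : Word)) = 0 := by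
    intro n c
    rw [Mgen, pr_improper (by simp [Proper]), ENNReal.ofReal_zero]
  rw [IsColoring, ae_iff]
  have hbig : μm (⋃ (n : ℤ), ⋃ (c : Fin 4), ICyl n ([c, c] : Word)) = 0 :=
    measure_iUnion_null fun n => measure_iUnion_null fun c => hnull n c
  refine measure_mono_null ?_ hbig
  intro x hx
  simp only [Set.mem_setOf_eq, not_forall, not_not] at hx
  obtain ⟨n, hn⟩ := hx
  simp only [Set.mem_iUnion]
  refine ⟨n, x n, ?_⟩
  intro i hi
  simp only [List.length_cons, List.length_nil] at hi
  interval_cases i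
  · simp
  · simpa using hn.symm


end HL4

/-- **Holroyd–Liggett**: there exists a stationary 1-dependent 4-coloring of `ℤ`. -/
theorem exists_stationary_one_dependent_four_coloring :
    ∃ μ : Measure (Config 4),
      IsProbabilityMeasure μ ∧ IsStationary' μ ∧ KDependent 1 μ ∧ IsColoring μ := by
  exact ⟨μm, inferInstance, main_stationary, main_kdep, main_coloring⟩
end

section
/- No block factor of an i.i.d. sequence is a proper coloring of ℤ: for every q ≥ 1, every r ≥ 1, and every measurable function f : [0,1]^r → Fin q, if X_n = f(U_{n+1}, U_{n+2}, …, U_{n+r}) for n ∈ ℤ, then P(X_0 = X_1) > 0; in particular the process (X_n) is not almost surely a proper q-coloring. -/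
open MeasureTheory ProbabilityTheory

namespace BlockFactorAux

lemma measurable_finCons {n : ℕ} :
    Measurable (fun p : ℝ × (Fin n → ℝ) => (Fin.cons p.1 p.2 : Fin (n + 1) → ℝ)) := by
  refine measurable_pi_lambda _ fun i => ?_
  induction i using Fin.cases with
  | zero => simpa only [Fin.cons_zero] using measurable_fst
  | succ j => simpa only [Fin.cons_succ, Function.comp_def] using (measurable_pi_apply j).comp measurable_snd

lemma measurable_finSnoc {n : ℕ} :
    Measurable (fun p : (Fin n → ℝ) × ℝ => (Fin.snoc p.1 p.2 : Fin (n + 1) → ℝ)) := by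
  refine measurable_pi_lambda _ fun i => ?_
  induction i using Fin.lastCases with
  | last => simpa only [Fin.snoc_last] using measurable_snd
  | cast j => simpa only [Fin.snoc_castSucc, Function.comp_def] using (measurable_pi_apply j).comp measurable_fst

lemma measurable_finInit {n : ℕ} :
    Measurable (fun u : Fin (n + 1) → ℝ => Fin.init u) :=
  measurable_pi_lambda _ fun _ => measurable_pi_apply _

lemma measurable_finTail {n : ℕ} :
    Measurable (fun u : Fin (n + 1) → ℝ => Fin.tail u) :=
  measurable_pi_lambda _ fun _ => measurable_pi_apply _

/-- Key lemma: for any probability measure `ν` on `ℝ`, any measurable `g` with values in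
`ℕ` bounded by `N`, the set where consecutive windows give the same value has positive
product measure. -/
theorem key (ν : Measure ℝ) [IsProbabilityMeasure ν] (r : ℕ) :
    ∀ g : (Fin (r + 1) → ℝ) → ℕ, Measurable g → ∀ N : ℕ, (∀ x, g x < N) →
      0 < Measure.pi (fun _ : Fin (r + 2) => ν)
        {u | g (Fin.init u) = g (Fin.tail u)} := by
  induction r with
  | zero =>
    intro g hg N _
    have hhm : Measurable (fun x : ℝ => g (fun _ => x)) :=
      hg.comp (measurable_pi_lambda _ fun _ => measurable_id)
    have hsum : ∑' c : ℕ, ν ((fun x : ℝ => g (fun _ => x)) ⁻¹' {c}) = 1 := by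
      rw [← measure_iUnion (fun c c' hcc' => Disjoint.preimage _ (by simpa using hcc'))
        (fun c => hhm (measurableSet_singleton c))]
      have : (⋃ c : ℕ, (fun x : ℝ => g (fun _ => x)) ⁻¹' {c}) = Set.univ := by
        ext x; simp
      rw [this, measure_univ]
    obtain ⟨c, hc⟩ : ∃ c, ν ((fun x : ℝ => g (fun _ => x)) ⁻¹' {c}) ≠ 0 := by
      by_contra hall
      push_neg at hall
      rw [ENNReal.tsum_eq_zero.mpr hall] at hsum
      exact one_ne_zero hsum.symm
    have hsub : Set.pi Set.univ (fun _ : Fin 2 => (fun x : ℝ => g (fun _ => x)) ⁻¹' {c}) ⊆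
        {u : Fin 2 → ℝ | g (Fin.init u) = g (Fin.tail u)} := by
      intro u hu
      have h0 : g (fun _ => u 0) = c := hu 0 (Set.mem_univ _)
      have h1 : g (fun _ => u 1) = c := hu 1 (Set.mem_univ _)
      have e1 : Fin.init u = fun _ : Fin 1 => u 0 := by
        funext i
        have : i = 0 := Subsingleton.elim _ _
        subst this; rfl
      have e2 : Fin.tail u = fun _ : Fin 1 => u 1 := by
        funext i
        have : i = 0 := Subsingleton.elim _ _
        subst this; rfl
      show g (Fin.init u) = g (Fin.tail u)
      rw [e1, e2, h0, h1]
    calc (0 : ENNReal) < ν ((fun x : ℝ => g (fun _ => x)) ⁻¹' {c}) *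
          ν ((fun x : ℝ => g (fun _ => x)) ⁻¹' {c}) :=
        ENNReal.mul_pos hc hc
      _ = Measure.pi (fun _ : Fin 2 => ν)
          (Set.pi Set.univ fun _ => (fun x : ℝ => g (fun _ => x)) ⁻¹' {c}) := by
        rw [Measure.pi_pi, Fin.prod_univ_two]
      _ ≤ _ := measure_mono hsub
  | succ r IH =>
    intro g hg N hN
    classical
    set pL : (Fin (r + 1) → ℝ) → ℕ → ENNReal :=
      fun w c => ν {x | g (Fin.cons x w) = c} with hpLdef
    set pR : (Fin (r + 1) → ℝ) → ℕ → ENNReal :=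
      fun w c => ν {y | g (Fin.snoc w y) = c} with hpRdef
    have hconsg : Measurable (fun p : ℝ × (Fin (r + 1) → ℝ) => g (Fin.cons p.1 p.2)) :=
      hg.comp measurable_finCons
    have hsnocg : Measurable (fun p : (Fin (r + 1) → ℝ) × ℝ => g (Fin.snoc p.1 p.2)) :=
      hg.comp measurable_finSnoc
    have hpLm : ∀ c, Measurable (fun w => pL w c) := fun c =>
      measurable_measure_prodMk_left
        ((hconsg.comp (measurable_snd.prodMk measurable_fst)) (measurableSet_singleton c))
    have hpRm : ∀ c, Measurable (fun w => pR w c) := fun c =>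
      measurable_measure_prodMk_left (hsnocg (measurableSet_singleton c))
    set g' : (Fin (r + 1) → ℝ) → ℕ := fun w =>
      (finFunctionFinEquiv (fun c : Fin N => if 0 < pL w (c : ℕ) then (1 : Fin 2) else 0)
        : Fin (2 ^ N)).val with hg'def
    have hg'm : Measurable g' := by
      have h1 : Measurable (fun w => (fun c : Fin N =>
          if 0 < pL w (c : ℕ) then (1 : Fin 2) else 0)) :=
        measurable_pi_lambda _ fun c =>
          Measurable.ite ((hpLm c) measurableSet_Ioi) measurable_const measurable_const
      exact (measurable_of_countable
        (fun v : Fin N → Fin 2 => (finFunctionFinEquiv v : Fin (2 ^ N)).val)).comp h1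
    have hg'lt : ∀ w, g' w < 2 ^ N := fun w => (finFunctionFinEquiv _).isLt
    by_contra hpos
    rw [pos_iff_ne_zero, ne_eq, not_not] at hpos
    -- the measure-preserving decomposition (w, (x, y))
    have hMP : MeasurePreserving
        (fun u : Fin (r + 3) → ℝ =>
          (((fun k : Fin (r + 1) => u k.castSucc.succ), (u 0, u (Fin.last (r + 2))))
            : (Fin (r + 1) → ℝ) × (ℝ × ℝ)))
        (Measure.pi fun _ : Fin (r + 3) => ν)
        ((Measure.pi fun _ : Fin (r + 1) => ν).prod (ν.prod ν)) := by
      have h1 := measurePreserving_piFinSuccAbove (fun _ : Fin (r + 3) => ν) 0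
      have h2 := (MeasurePreserving.id ν).prod
        (measurePreserving_piFinSuccAbove (fun _ : Fin (r + 2) => ν) (Fin.last (r + 1)))
      have h3 := (MeasurePreserving.id ν).prod
        (Measure.measurePreserving_swap (μ := ν) (ν := Measure.pi fun _ : Fin (r + 1) => ν))
      have h4 := (measurePreserving_prodAssoc ν (Measure.pi fun _ : Fin (r + 1) => ν) ν).symm
        (MeasurableEquiv.prodAssoc)
      have h5 := (Measure.measurePreserving_swap (μ := ν) (ν := Measure.pi fun _ : Fin (r + 1) => ν)).prod
        (MeasurePreserving.id ν)
      have h6 := measurePreserving_prodAssoc (Measure.pi fun _ : Fin (r + 1) => ν) ν ν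
      have hcomp := h6.comp (h5.comp (h4.comp (h3.comp (h2.comp h1))))
      have hfun : (⇑MeasurableEquiv.prodAssoc ∘ (Prod.map Prod.swap id ∘
          (⇑MeasurableEquiv.prodAssoc.symm ∘ (Prod.map id Prod.swap ∘
          (Prod.map id (⇑(MeasurableEquiv.piFinSuccAbove (fun _ : Fin (r + 2) => ℝ)
              (Fin.last (r + 1)))) ∘
          ⇑(MeasurableEquiv.piFinSuccAbove (fun _ : Fin (r + 3) => ℝ) 0)))))) =
          fun u : Fin (r + 3) → ℝ =>
          (((fun k : Fin (r + 1) => u k.castSucc.succ), (u 0, u (Fin.last (r + 2))))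
            : (Fin (r + 1) → ℝ) × (ℝ × ℝ)) := by
        funext u
        simp [MeasurableEquiv.piFinSuccAbove_apply, MeasurableEquiv.prodAssoc,
          Fin.succAbove_zero, Fin.succAbove_last, Function.comp, Prod.map, Fin.succ_last]
        refine ⟨rfl, ?_⟩
        show u (Fin.last (r + 1)).succ = u (Fin.last (r + 2))
        rw [Fin.succ_last]
      rw [hfun] at hcomp
      exact hcomp
    have hE3meas : MeasurableSet {q : (Fin (r + 1) → ℝ) × (ℝ × ℝ) |
        g (Fin.cons q.2.1 q.1) = g (Fin.snoc q.1 q.2.2)} :=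
      measurableSet_eq_fun
        (hconsg.comp ((measurable_fst.comp measurable_snd).prodMk measurable_fst))
        (hsnocg.comp (measurable_fst.prodMk (measurable_snd.comp measurable_snd)))
    have hpre : {u : Fin (r + 3) → ℝ | g (Fin.init u) = g (Fin.tail u)} =
        (fun u : Fin (r + 3) → ℝ =>
          (((fun k : Fin (r + 1) => u k.castSucc.succ), (u 0, u (Fin.last (r + 2))))
            : (Fin (r + 1) → ℝ) × (ℝ × ℝ))) ⁻¹'
          {q : (Fin (r + 1) → ℝ) × (ℝ × ℝ) |
            g (Fin.cons q.2.1 q.1) = g (Fin.snoc q.1 q.2.2)} := by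
      ext u
      simp only [Set.mem_setOf_eq, Set.mem_preimage]
      have e1 : Fin.init u = Fin.cons (u 0) (fun k : Fin (r + 1) => u k.castSucc.succ) := by
        funext i
        induction i using Fin.cases with
        | zero => simp [Fin.init]
        | succ j => simp only [Fin.init, Fin.cons_succ]; rfl
      have e2 : Fin.tail u =
          Fin.snoc (fun k : Fin (r + 1) => u k.castSucc.succ) (u (Fin.last (r + 2))) := by
        funext i
        induction i using Fin.lastCases with
        | last => simp [Fin.tail, Fin.snoc_last, Fin.succ_last]
        | cast j => simp [Fin.tail, Fin.snoc_castSucc]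
      rw [e1, e2]
    have hE3null : ((Measure.pi fun _ : Fin (r + 1) => ν).prod (ν.prod ν))
        {q : (Fin (r + 1) → ℝ) × (ℝ × ℝ) |
          g (Fin.cons q.2.1 q.1) = g (Fin.snoc q.1 q.2.2)} = 0 := by
      rw [← hMP.measure_preimage hE3meas.nullMeasurableSet, ← hpre]
      exact hpos
    have hdisj : ∀ᵐ w ∂(Measure.pi fun _ : Fin (r + 1) => ν),
        ∀ c : ℕ, pL w c = 0 ∨ pR w c = 0 := by
      have hae := (Measure.measure_prod_null hE3meas).mp hE3null
      filter_upwards [hae] with w hw c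
      have hsub : {x : ℝ | g (Fin.cons x w) = c} ×ˢ {y : ℝ | g (Fin.snoc w y) = c} ⊆
          Prod.mk w ⁻¹' {q : (Fin (r + 1) → ℝ) × (ℝ × ℝ) |
            g (Fin.cons q.2.1 q.1) = g (Fin.snoc q.1 q.2.2)} := by
        rintro ⟨x, y⟩ ⟨hx, hy⟩
        exact hx.trans hy.symm
      have hmul : pL w c * pR w c = 0 := by
        rw [hpLdef, hpRdef, ← Measure.prod_prod]
        exact measure_mono_null hsub hw
      exact mul_eq_zero.mp hmul
    -- a.e. the value of g lies in the right essential range of the initial window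
    have hQR : Measure.QuasiMeasurePreserving
        (fun v : Fin (r + 2) → ℝ => ((Fin.init v, v (Fin.last (r + 1)))
          : (Fin (r + 1) → ℝ) × ℝ))
        (Measure.pi fun _ : Fin (r + 2) => ν) ((Measure.pi fun _ : Fin (r + 1) => ν).prod ν) := by
      have h1 := measurePreserving_piFinSuccAbove (fun _ : Fin (r + 2) => ν) (Fin.last (r + 1))
      have h2 := Measure.measurePreserving_swap (μ := ν) (ν := Measure.pi fun _ : Fin (r + 1) => ν)
      have hc := (h2.comp h1).quasiMeasurePreserving
      have hfun : (Prod.swap ∘ ⇑(MeasurableEquiv.piFinSuccAbove (fun _ : Fin (r + 2) => ℝ)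
          (Fin.last (r + 1)))) =
          fun v : Fin (r + 2) → ℝ => ((Fin.init v, v (Fin.last (r + 1)))
            : (Fin (r + 1) → ℝ) × ℝ) := by
        funext v
        simp [MeasurableEquiv.piFinSuccAbove_apply, Fin.succAbove_last, Function.comp, Fin.init]
      rwa [hfun] at hc
    have hBRnull : ((Measure.pi fun _ : Fin (r + 1) => ν).prod ν)
        {p : (Fin (r + 1) → ℝ) × ℝ | pR p.1 (g (Fin.snoc p.1 p.2)) = 0} = 0 := by
      have hqm : Measurable (fun p : (Fin (r + 1) → ℝ) × ℝ => pR p.1 (g (Fin.snoc p.1 p.2))) := by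
        have hPR : Measurable (fun q : (Fin (r + 1) → ℝ) × ℕ => pR q.1 q.2) :=
          measurable_from_prod_countable_left fun c => hpRm c
        exact hPR.comp (measurable_fst.prodMk hsnocg)
      have hqm' : MeasurableSet {p : (Fin (r + 1) → ℝ) × ℝ | pR p.1 (g (Fin.snoc p.1 p.2)) = 0} :=
        hqm (measurableSet_singleton 0)
      rw [Measure.measure_prod_null hqm']
      refine Filter.Eventually.of_forall fun w => ?_
      show ν (Prod.mk w ⁻¹' _) = 0
      have hsub : (Prod.mk w ⁻¹'
          {p : (Fin (r + 1) → ℝ) × ℝ | pR p.1 (g (Fin.snoc p.1 p.2)) = 0}) ⊆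
          ⋃ (c : ℕ) (_ : pR w c = 0), {y : ℝ | g (Fin.snoc w y) = c} := by
        intro y hy
        exact Set.mem_iUnion.mpr ⟨g (Fin.snoc w y), Set.mem_iUnion.mpr ⟨hy, rfl⟩⟩
      exact measure_mono_null hsub
        (measure_iUnion_null fun c => measure_iUnion_null fun hc => hc)
    have hmemR : ∀ᵐ v ∂(Measure.pi fun _ : Fin (r + 2) => ν),
        ¬ pR (Fin.init v) (g v) = 0 := by
      have hae : ∀ᵐ p ∂((Measure.pi fun _ : Fin (r + 1) => ν).prod ν),
          ¬ pR p.1 (g (Fin.snoc p.1 p.2)) = 0 := by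
        rw [ae_iff]; simpa using hBRnull
      have h2 := hQR.tendsto_ae.eventually hae
      filter_upwards [h2] with v hv
      rwa [Fin.snoc_init_self] at hv
    -- a.e. the value of g lies in the left essential range of the final window
    have hQL : Measure.QuasiMeasurePreserving
        (fun v : Fin (r + 2) → ℝ => ((Fin.tail v, v 0) : (Fin (r + 1) → ℝ) × ℝ))
        (Measure.pi fun _ : Fin (r + 2) => ν) ((Measure.pi fun _ : Fin (r + 1) => ν).prod ν) := by
      have h1 := measurePreserving_piFinSuccAbove (fun _ : Fin (r + 2) => ν) 0
      have h2 := Measure.measurePreserving_swap (μ := ν) (ν := Measure.pi fun _ : Fin (r + 1) => ν)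
      have hc := (h2.comp h1).quasiMeasurePreserving
      have hfun : (Prod.swap ∘ ⇑(MeasurableEquiv.piFinSuccAbove (fun _ : Fin (r + 2) => ℝ) 0)) =
          fun v : Fin (r + 2) → ℝ => ((Fin.tail v, v 0) : (Fin (r + 1) → ℝ) × ℝ) := by
        funext v
        simp [MeasurableEquiv.piFinSuccAbove_apply, Fin.succAbove_zero, Function.comp, Fin.tail]
      rwa [hfun] at hc
    have hBLnull : ((Measure.pi fun _ : Fin (r + 1) => ν).prod ν)
        {p : (Fin (r + 1) → ℝ) × ℝ | pL p.1 (g (Fin.cons p.2 p.1)) = 0} = 0 := by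
      have hqm : Measurable (fun p : (Fin (r + 1) → ℝ) × ℝ => pL p.1 (g (Fin.cons p.2 p.1))) := by
        have hPL : Measurable (fun q : (Fin (r + 1) → ℝ) × ℕ => pL q.1 q.2) :=
          measurable_from_prod_countable_left fun c => hpLm c
        exact hPL.comp (measurable_fst.prodMk
          (hconsg.comp (measurable_snd.prodMk measurable_fst)))
      have hqm' : MeasurableSet {p : (Fin (r + 1) → ℝ) × ℝ | pL p.1 (g (Fin.cons p.2 p.1)) = 0} :=
        hqm (measurableSet_singleton 0)
      rw [Measure.measure_prod_null hqm']
      refine Filter.Eventually.of_forall fun w => ?_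
      show ν (Prod.mk w ⁻¹' _) = 0
      have hsub : (Prod.mk w ⁻¹'
          {p : (Fin (r + 1) → ℝ) × ℝ | pL p.1 (g (Fin.cons p.2 p.1)) = 0}) ⊆
          ⋃ (c : ℕ) (_ : pL w c = 0), {x : ℝ | g (Fin.cons x w) = c} := by
        intro x hx
        exact Set.mem_iUnion.mpr ⟨g (Fin.cons x w), Set.mem_iUnion.mpr ⟨hx, rfl⟩⟩
      exact measure_mono_null hsub
        (measure_iUnion_null fun c => measure_iUnion_null fun hc => hc)
    have hmemL : ∀ᵐ v ∂(Measure.pi fun _ : Fin (r + 2) => ν),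
        ¬ pL (Fin.tail v) (g v) = 0 := by
      have hae : ∀ᵐ p ∂((Measure.pi fun _ : Fin (r + 1) => ν).prod ν),
          ¬ pL p.1 (g (Fin.cons p.2 p.1)) = 0 := by
        rw [ae_iff]; simpa using hBLnull
      have h2 := hQL.tendsto_ae.eventually hae
      filter_upwards [h2] with v hv
      rwa [Fin.cons_self_tail] at hv
    -- transfer the disjointness to a.e. v
    have hQinit : Measure.QuasiMeasurePreserving (fun v : Fin (r + 2) → ℝ => Fin.init v)
        (Measure.pi fun _ : Fin (r + 2) => ν) (Measure.pi fun _ : Fin (r + 1) => ν) :=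
      Measure.quasiMeasurePreserving_fst.comp hQR
    have hdisj' : ∀ᵐ v ∂(Measure.pi fun _ : Fin (r + 2) => ν),
        ∀ c : ℕ, pL (Fin.init v) c = 0 ∨ pR (Fin.init v) c = 0 :=
      hQinit.tendsto_ae.eventually hdisj
    -- contradiction with the inductive hypothesis
    have hzero : (Measure.pi fun _ : Fin (r + 2) => ν)
        {v | g' (Fin.init v) = g' (Fin.tail v)} = 0 := by
      have hae : ∀ᵐ v ∂(Measure.pi fun _ : Fin (r + 2) => ν),
          ¬ g' (Fin.init v) = g' (Fin.tail v) := by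
        filter_upwards [hmemR, hmemL, hdisj'] with v h1 h2 h3 heq
        have hc0 : g v < N := hN v
        have hL0 : pL (Fin.init v) (g v) = 0 := by
          rcases h3 (g v) with h | h
          · exact h
          · exact absurd h h1
        have hfun : (fun c : Fin N => if 0 < pL (Fin.init v) (c : ℕ) then (1 : Fin 2) else 0) =
            (fun c : Fin N => if 0 < pL (Fin.tail v) (c : ℕ) then (1 : Fin 2) else 0) :=
          finFunctionFinEquiv.injective (Fin.val_injective heq)
        have hbit := congrFun hfun ⟨g v, hc0⟩
        rw [if_neg (by simp [hL0]), if_pos (pos_iff_ne_zero.mpr h2)] at hbit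
        exact absurd hbit (by decide)
      rw [ae_iff] at hae
      simpa using hae
    have hIH := IH g' hg'm (2 ^ N) hg'lt
    rw [hzero] at hIH
    exact lt_irrefl 0 hIH

end BlockFactorAux

/-- **No block factor of an i.i.d. sequence is a proper coloring of `ℤ`.** If
`(U_n)_{n ∈ ℤ}` are i.i.d. uniform on `[0,1]` and `X_n = f (U_{n+1}, …, U_{n+r})` for a
measurable `f`, then `P(X_0 = X_1) > 0`; in particular `(X_n)` is not almost surely a
proper `q`-coloring. -/
theorem block_factor_not_coloring
    {Ω : Type*} [MeasurableSpace Ω] (P : Measure Ω) [IsProbabilityMeasure P]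
    (q r : ℕ) (hq : 1 ≤ q) (hr : 1 ≤ r)
    (U : ℤ → Ω → ℝ) (hmeas : ∀ n, Measurable (U n))
    (hindep : iIndepFun U P)
    (hunif : ∀ n, P.map (U n) = volume.restrict (Set.Icc (0 : ℝ) 1))
    (f : (Fin r → ℝ) → Fin q) (hf : Measurable f)
    (X : ℤ → Ω → Fin q)
    (hX : ∀ n ω, X n ω = f fun i => U (n + 1 + (i : ℕ)) ω) :
    0 < P {ω | X 0 ω = X 1 ω} ∧
      ¬ (∀ᵐ ω ∂P, ∀ n : ℤ, X n ω ≠ X (n + 1) ω) := by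
  classical
  obtain ⟨r', rfl⟩ : ∃ r', r = r' + 1 := ⟨r - 1, (Nat.succ_pred_eq_of_pos hr).symm⟩
  haveI hνprob : IsProbabilityMeasure (volume.restrict (Set.Icc (0 : ℝ) 1)) :=
    ⟨by simp [Real.volume_Icc]⟩
  set ν : Measure ℝ := volume.restrict (Set.Icc (0 : ℝ) 1) with hν
  set V : Ω → (Fin (r' + 2) → ℝ) := fun ω j => U (1 + (j : ℕ)) ω with hV
  have hVm : Measurable V := measurable_pi_lambda _ fun j => hmeas _
  set φ : Fin (r' + 2) → ℤ := fun j => 1 + (j : ℕ) with hφ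
  have hφinj : Function.Injective φ := by
    intro a b hab
    simp only [hφ, add_right_inj] at hab
    exact Fin.val_injective (by exact_mod_cast hab)
  have hmap : P.map V = Measure.pi (fun _ : Fin (r' + 2) => ν) := by
    refine (Measure.pi_eq fun s hs => ?_).symm
    set t : ℤ → Set ℝ := fun n => if h : ∃ j, φ j = n then s h.choose else Set.univ with ht
    have htφ : ∀ j, t (φ j) = s j := by
      intro j
      have hex : ∃ j', φ j' = φ j := ⟨j, rfl⟩
      simp only [ht, dif_pos hex]
      exact congrArg s (hφinj hex.choose_spec)
    have htmeas : ∀ n, MeasurableSet (t n) := by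
      intro n
      by_cases h : ∃ j, φ j = n
      · simp only [ht, dif_pos h]; exact hs _
      · simp only [ht, dif_neg h]; exact MeasurableSet.univ
    have hbi := hindep.meas_biInter (S := Finset.image φ Finset.univ)
      (s := fun n => U n ⁻¹' t n) (fun n _ => ⟨t n, htmeas n, rfl⟩)
    have hInter : (⋂ n ∈ Finset.image φ Finset.univ, U n ⁻¹' t n) =
        ⋂ j, U (φ j) ⁻¹' s j := by
      ext ω
      simp only [Set.mem_iInter, Finset.mem_image, Finset.mem_univ, true_and, Set.mem_preimage]
      constructor
      · intro h j
        have := h (φ j) ⟨j, rfl⟩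
        rwa [htφ j] at this
      · rintro h n ⟨j, rfl⟩
        rw [htφ j]; exact h j
    have hProd : (∏ n ∈ Finset.image φ Finset.univ, P (U n ⁻¹' t n)) =
        ∏ j, P (U (φ j) ⁻¹' s j) := by
      rw [Finset.prod_image (fun a _ b _ h => hφinj h)]
      exact Finset.prod_congr rfl fun j _ => by rw [htφ j]
    have hmarg : ∀ j, P (U (φ j) ⁻¹' s j) = ν (s j) := by
      intro j
      rw [← Measure.map_apply (hmeas _) (hs j), hunif]
    calc P.map V (Set.pi Set.univ s) = P (V ⁻¹' Set.pi Set.univ s) :=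
          Measure.map_apply hVm (MeasurableSet.univ_pi hs)
      _ = P (⋂ j, U (φ j) ⁻¹' s j) := by
          congr 1
          ext ω
          simp only [Set.mem_preimage, Set.mem_pi, Set.mem_univ, true_implies, Set.mem_iInter]
          exact Iff.rfl
      _ = ∏ n ∈ Finset.image φ Finset.univ, P (U n ⁻¹' t n) := by rw [← hInter, hbi]
      _ = ∏ j, P (U (φ j) ⁻¹' s j) := hProd
      _ = ∏ j, ν (s j) := Finset.prod_congr rfl fun j _ => hmarg j
  have hkey := BlockFactorAux.key ν r' (fun x => ((f x : ℕ)))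
    ((measurable_of_countable _).comp hf) q (fun x => (f x).isLt)
  have hE'meas : MeasurableSet {u : Fin (r' + 2) → ℝ |
      ((f (Fin.init u) : ℕ)) = ((f (Fin.tail u) : ℕ))} :=
    measurableSet_eq_fun
      (((measurable_of_countable _).comp hf).comp BlockFactorAux.measurable_finInit)
      (((measurable_of_countable _).comp hf).comp BlockFactorAux.measurable_finTail)
  have hEq : {ω | X 0 ω = X 1 ω} = V ⁻¹' {u : Fin (r' + 2) → ℝ |
      ((f (Fin.init u) : ℕ)) = ((f (Fin.tail u) : ℕ))} := by
    ext ω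
    simp only [Set.mem_setOf_eq, Set.mem_preimage]
    rw [hX 0 ω, hX 1 ω]
    have e1 : Fin.init (V ω) = fun i : Fin (r' + 1) => U ((0 : ℤ) + 1 + (i : ℕ)) ω := by
      funext i
      show U (1 + ((i.castSucc : Fin (r' + 2)) : ℕ)) ω = _
      congr 1
    have e2 : Fin.tail (V ω) = fun i : Fin (r' + 1) => U ((1 : ℤ) + 1 + (i : ℕ)) ω := by
      funext i
      show U (1 + ((i.succ : Fin (r' + 2)) : ℕ)) ω = _
      congr 1
      simp only [Fin.val_succ]
      push_cast
      ring
    rw [e1, e2]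
    exact ⟨fun h => congrArg _ h, fun h => Fin.val_injective h⟩
  have hpos : 0 < P {ω | X 0 ω = X 1 ω} := by
    rw [hEq, ← Measure.map_apply hVm hE'meas, hmap]
    exact hkey
  refine ⟨hpos, fun hA => ?_⟩
  have h1 : {ω | X 0 ω = X 1 ω} ⊆ {ω | ¬ ∀ n : ℤ, X n ω ≠ X (n + 1) ω} := by
    intro ω hω hall
    exact hall 0 (by simpa using hω)
  exact absurd (measure_mono_null h1 (ae_iff.mp hA)) hpos.ne'
end

section
/- For every k ∈ ℕ there is no stationary k-dependent 2-coloring of ℤ: no probability measure μ on ℤ → Fin 2 is simultaneously stationary, k-dependent, and a 2-coloring. -/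
open MeasureTheory ProbabilityTheory

/-- A measure on configurations is stationary if it is invariant under the shift. -/
def IsShiftStationary {q : ℕ} (μ : Measure (Config q)) : Prop :=
  μ.map shift = μ

lemma config_even_eq {x : Config 2} (hx : ∀ n : ℤ, x n ≠ x (n + 1)) (j : ℕ) :
    x ((2 * j : ℕ) : ℤ) = x 0 := by
  have hstep : ∀ n : ℤ, x (n + 1) = x n + 1 := by
    intro n
    have h := hx n
    revert h
    generalize x n = a; generalize x (n + 1) = b
    revert a b; decide
  induction j with
  | zero => norm_num
  | succ j ih =>
    have h2 : ((2 * (j + 1) : ℕ) : ℤ) = ((2 * j : ℕ) : ℤ) + 1 + 1 := by push_cast; ring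
    rw [h2, hstep, hstep, ih]
    generalize x 0 = a; revert a; decide

lemma coord_measurableSet {a : ℤ} {A : Set ℤ} (ha : a ∈ A) :
    MeasurableSet[coordSigma 2 A] {x : Config 2 | x a = 0} := by
  have hle : MeasurableSpace.comap (fun x : Config 2 => x a) inferInstance ≤
      coordSigma 2 A :=
    le_iSup₂ (f := fun b (_ : b ∈ A) =>
      MeasurableSpace.comap (fun x : Config 2 => x b) inferInstance) a ha
  exact hle _ ⟨{0}, measurableSet_singleton 0, rfl⟩

/-- For every `k`, there is no stationary `k`-dependent 2-coloring of `ℤ`. -/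
theorem no_stationary_k_dependent_two_coloring (k : ℕ) (μ : Measure (Config 2))
    (hprob : IsProbabilityMeasure μ) (hstat : IsShiftStationary μ)
    (hdep : KDependent k μ) (hcol : IsColoring μ) : False := by
  classical
  set N : ℤ := ((2 * (k + 1) : ℕ) : ℤ) with hN
  set E : Set (Config 2) := {x | x 0 = 0} with hE
  set F : Set (Config 2) := {x | x N = 0} with hF
  have hEmeas : MeasurableSet E :=
    (measurable_pi_apply 0) (measurableSet_singleton 0)
  -- independence of E and F
  have hcond : ∀ a ∈ ({0} : Set ℤ), ∀ b ∈ ({N} : Set ℤ), (k : ℤ) < |a - b| := by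
    intro a ha b hb
    simp only [Set.mem_singleton_iff] at ha hb
    subst ha; subst hb
    rw [zero_sub, abs_neg, abs_of_nonneg (by rw [hN]; exact Int.natCast_nonneg _)]
    rw [hN]; push_cast; omega
  have hindep := (Indep_iff _ _ μ).mp (hdep {0} {N} hcond)
  have hmul : μ (E ∩ F) = μ E * μ F :=
    hindep E F (coord_measurableSet rfl) (coord_measurableSet rfl)
  -- a.s. x N = x 0, so F =ᵐ E and E ∩ F =ᵐ E
  have haeq : ∀ᵐ x ∂μ, x N = x 0 := hcol.mono fun x hx => config_even_eq hx (k + 1)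
  have hFE : μ F = μ E := by
    apply measure_congr
    rw [Filter.eventuallyEq_set]
    filter_upwards [haeq] with x hx
    simp [hF, hE, hx]
  have hEFE : μ (E ∩ F) = μ E := by
    apply measure_congr
    rw [Filter.eventuallyEq_set]
    filter_upwards [haeq] with x hx
    simp only [Set.mem_inter_iff, hF, hE, Set.mem_setOf_eq, hx]
    tauto
  have hsq : μ E = μ E * μ E := hEFE.symm.trans (hmul.trans (by rw [hFE]))
  -- stationarity: μ E = μ Eᶜ
  have hshift_meas : Measurable (shift (q := 2)) :=
    measurable_pi_lambda _ fun n => measurable_pi_apply (n + 1)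
  have h1 : μ E = μ {x : Config 2 | x (0 + 1) = 0} := by
    conv_lhs => rw [← hstat]
    rw [Measure.map_apply hshift_meas hEmeas]
    rfl
  have h2 : μ {x : Config 2 | x (0 + 1) = 0} = μ Eᶜ := by
    apply measure_congr
    rw [Filter.eventuallyEq_set]
    filter_upwards [hcol] with x hx
    have h := hx 0
    simp only [Set.mem_setOf_eq, Set.mem_compl_iff, hE]
    revert h
    generalize x 0 = a; generalize x (0 + 1) = b
    revert a b; decide
  have hsum : μ E + μ Eᶜ = 1 := by
    rw [measure_add_measure_compl hEmeas]
    exact measure_univ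
  rw [← h2, ← h1] at hsum
  -- arithmetic contradiction in ℝ≥0∞
  have h2c : 2 * μ E = 1 := by rw [two_mul]; exact hsum
  have hc1 : μ E = 1 := by
    calc μ E = 1 * μ E := (one_mul _).symm
    _ = (2 * μ E) * μ E := by rw [h2c]
    _ = 2 * (μ E * μ E) := by ring
    _ = 2 * μ E := by rw [← hsq]
    _ = 1 := h2c
  rw [hc1] at h2c
  norm_num at h2c
end

section
/- (Crandall–Liggett generation theorem.) Let X be a real Banach space and A ⊆ X × X an accretive operator with domain D = {x : ∃ y, (x,y) ∈ A}. Suppose there is λ₀ > 0 such that for every λ ∈ (0, λ₀) there exists a function J_λ : closure(D) → X satisfying: for every z ∈ closure(D) there exists y ∈ X with (J_λ z, y) ∈ A and J_λ z + λ·y = z (in particular J_λ z ∈ D ⊆ closure(D)). Then for every x ∈ closure(D) and every t ≥ 0, the iterates (J_{t/n})^n x (defined for all integers n > t/λ₀, with the convention (J_{t/n})^n x = x when t = 0) converge in X as n → ∞; denoting the limit by S(t)x, the family (S(t))_{t≥0} is a strongly continuous contraction semigroup on closure(D): S(0)x = x, S(t+s)x = S(t)(S(s)x), ‖S(t)x −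 S(t)x'‖ ≤ ‖x − x'‖ for all x, x' ∈ closure(D) and s,t ≥ 0, and t ↦ S(t)x is continuous on [0,∞) for each x ∈ closure(D). -/
open Filter

-- concavity of sqrt
lemma CL_conc {a b p q : ℝ} (ha : 0 ≤ a) (hb : 0 ≤ b) (hab : a + b = 1)
    (hp : 0 ≤ p) (hq : 0 ≤ q) :
    a * Real.sqrt p + b * Real.sqrt q ≤ Real.sqrt (a * p + b * q) := by
  rw [Real.le_sqrt (by positivity) (by positivity)]
  have e1 := Real.sq_sqrt hp
  have e2 := Real.sq_sqrt hq
  set s := Real.sqrt p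
  set t := Real.sqrt q
  have key : (a*s + b*t)^2 = a*s^2 + b*t^2 - a*b*(s-t)^2 := by linear_combination (a*s^2 + b*t^2) * hab
  nlinarith [mul_nonneg (mul_nonneg ha hb) (sq_nonneg (s - t))]

lemma CL_arith {lam mu : ℝ} (hlam : lam ≠ 0) (N M : ℝ) :
    (mu/lam) * ((N*lam - M*mu)^2 + N*lam^2 + M*mu^2)
      + (1 - mu/lam) * (((N+1)*lam - M*mu)^2 + (N+1)*lam^2 + M*mu^2)
    = (((N+1)*lam - (M+1)*mu)^2 + (N+1)*lam^2 + (M+1)*mu^2) - 2*mu^2 := by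
  field_simp
  ring

section CL

variable {X : Type*} [NormedAddCommGroup X] [NormedSpace ℝ X] [CompleteSpace X]
    {A : Set (X × X)}
    (hacc : ∀ p ∈ A, ∀ q ∈ A, ∀ lam : ℝ, 0 < lam →
      ‖p.1 - q.1‖ ≤ ‖p.1 - q.1 + lam • (p.2 - q.2)‖)
    {D : Set X} (hD : D = {x | ∃ y : X, (x, y) ∈ A})
    {lam₀ : ℝ} (hlam₀ : 0 < lam₀)
    {J : ℝ → X → X}
    (hJ : ∀ lam : ℝ, 0 < lam → lam < lam₀ → ∀ z ∈ closure D,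
      ∃ y : X, (J lam z, y) ∈ A ∧ J lam z + lam • y = z)

include hD hJ in
lemma CL_mem {lam : ℝ} (h1 : 0 < lam) (h2 : lam < lam₀) {z : X} (hz : z ∈ closure D) :
    J lam z ∈ closure D := by
  obtain ⟨y, hy1, -⟩ := hJ lam h1 h2 z hz
  exact subset_closure (by rw [hD]; exact ⟨y, hy1⟩)

include hD hJ in
lemma CL_iter_mem {lam : ℝ} (h1 : 0 < lam) (h2 : lam < lam₀) {z : X} (hz : z ∈ closure D)
    (n : ℕ) : (J lam)^[n] z ∈ closure D := by
  induction n with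
  | zero => simpa using hz
  | succ n ih => rw [Function.iterate_succ_apply']; exact CL_mem hD hJ h1 h2 ih

include hacc hD hJ in
lemma CL_contract {lam : ℝ} (h1 : 0 < lam) (h2 : lam < lam₀) {z z' : X}
    (hz : z ∈ closure D) (hz' : z' ∈ closure D) :
    ‖J lam z - J lam z'‖ ≤ ‖z - z'‖ := by
  obtain ⟨y, hy1, hy2⟩ := hJ lam h1 h2 z hz
  obtain ⟨y', hy1', hy2'⟩ := hJ lam h1 h2 z' hz'
  have h := hacc _ hy1 _ hy1' lam h1
  have hkey : J lam z - J lam z' + lam • (y - y') = z - z' := by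
    have e : (J lam z + lam • y) - (J lam z' + lam • y') = z - z' := by rw [hy2, hy2']
    rw [← e, smul_sub]; abel
  simpa [hkey] using h

include hacc hD hJ in
lemma CL_iter_contract {lam : ℝ} (h1 : 0 < lam) (h2 : lam < lam₀) {z z' : X}
    (hz : z ∈ closure D) (hz' : z' ∈ closure D) (n : ℕ) :
    ‖(J lam)^[n] z - (J lam)^[n] z'‖ ≤ ‖z - z'‖ := by
  induction n with
  | zero => simp
  | succ n ih =>
    rw [Function.iterate_succ_apply', Function.iterate_succ_apply']
    exact le_trans (CL_contract hacc hD hJ h1 h2 (CL_iter_mem hD hJ h1 h2 hz n)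
      (CL_iter_mem hD hJ h1 h2 hz' n)) ih

include hacc hD hJ in
lemma CL_step_bound {lam : ℝ} (h1 : 0 < lam) (h2 : lam < lam₀) {x yx : X}
    (hxy : (x, yx) ∈ A) : ‖J lam x - x‖ ≤ lam * ‖yx‖ := by
  have hxc : x ∈ closure D := subset_closure (by rw [hD]; exact ⟨yx, hxy⟩)
  obtain ⟨y, hy1, hy2⟩ := hJ lam h1 h2 x hxc
  have h := hacc _ hy1 _ hxy lam h1
  have hkey : J lam x - x + lam • (y - yx) = -(lam • yx) := by
    have e1 : lam • y = x - J lam x := by rw [eq_sub_iff_add_eq, add_comm]; exact hy2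
    rw [smul_sub, e1]; abel
  rw [hkey] at h
  calc ‖J lam x - x‖ ≤ ‖-(lam • yx)‖ := h
    _ = lam * ‖yx‖ := by rw [norm_neg, norm_smul, Real.norm_eq_abs, abs_of_pos h1]

include hacc hD hJ in
lemma CL_iter_step_bound {lam : ℝ} (h1 : 0 < lam) (h2 : lam < lam₀) {x yx : X}
    (hxy : (x, yx) ∈ A) (n : ℕ) : ‖(J lam)^[n] x - x‖ ≤ n * lam * ‖yx‖ := by
  have hxc : x ∈ closure D := subset_closure (by rw [hD]; exact ⟨yx, hxy⟩)
  induction n with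
  | zero => simp
  | succ n ih =>
    have hJx : J lam x ∈ closure D := CL_mem hD hJ h1 h2 hxc
    calc ‖(J lam)^[n+1] x - x‖
        ≤ ‖(J lam)^[n+1] x - (J lam)^[n] x‖ + ‖(J lam)^[n] x - x‖ := norm_sub_le_norm_sub_add_norm_sub _ _ _
      _ ≤ ‖J lam x - x‖ + ↑n * lam * ‖yx‖ := by
          gcongr
          rw [Function.iterate_succ_apply]
          exact CL_iter_contract hacc hD hJ h1 h2 hJx hxc n
      _ ≤ lam * ‖yx‖ + ↑n * lam * ‖yx‖ := by
          gcongr; exact CL_step_bound hacc hD hJ h1 h2 hxy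
      _ = (↑(n+1)) * lam * ‖yx‖ := by push_cast; ring

include hacc hD hJ in
lemma CL_step {lam mu : ℝ} (hmu : 0 < mu) (hml : mu ≤ lam) (h2 : lam < lam₀)
    {ξ η : X} (hξ : ξ ∈ closure D) (hη : η ∈ closure D) :
    ‖J lam ξ - J mu η‖ ≤ (mu/lam) * ‖ξ - η‖ + (1 - mu/lam) * ‖J lam ξ - η‖ := by
  have h1 : 0 < lam := hmu.trans_le hml
  obtain ⟨yp, hp1, hp2⟩ := hJ lam h1 h2 ξ hξ
  obtain ⟨yq, hq1, hq2⟩ := hJ mu hmu (lt_of_le_of_lt hml h2) η hη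
  have h := hacc _ hp1 _ hq1 mu hmu
  simp only at h
  have e1 : lam • yp = ξ - J lam ξ := by rw [eq_sub_iff_add_eq, add_comm]; exact hp2
  have e2 : mu • yq = η - J mu η := by rw [eq_sub_iff_add_eq, add_comm]; exact hq2
  have e3 : mu • yp = (mu/lam) • (ξ - J lam ξ) := by
    rw [← e1, smul_smul, div_mul_cancel₀ _ h1.ne']
  have hkey : J lam ξ - J mu η + mu • (yp - yq)
      = (mu/lam) • (ξ - η) + (1 - mu/lam) • (J lam ξ - η) := by
    rw [smul_sub, e3, e2]
    simp only [smul_sub, sub_smul, one_smul]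
    abel
  rw [hkey] at h
  calc ‖J lam ξ - J mu η‖ ≤ ‖(mu/lam) • (ξ - η) + (1 - mu/lam) • (J lam ξ - η)‖ := h
    _ ≤ ‖(mu/lam) • (ξ - η)‖ + ‖(1 - mu/lam) • (J lam ξ - η)‖ := norm_add_le _ _
    _ = (mu/lam) * ‖ξ - η‖ + (1 - mu/lam) * ‖J lam ξ - η‖ := by
        rw [norm_smul, norm_smul, Real.norm_eq_abs, Real.norm_eq_abs,
          abs_of_nonneg (by positivity), abs_of_nonneg (by simp [div_le_one h1, hml])]

include hacc hD hJ in
lemma CL_core {x yx : X} (hxy : (x, yx) ∈ A) {lam mu : ℝ} (hmu : 0 < mu) (hml : mu ≤ lam)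
    (h2 : lam < lam₀) (n m : ℕ) :
    ‖(J lam)^[n] x - (J mu)^[m] x‖
      ≤ ‖yx‖ * Real.sqrt (((n:ℝ)*lam - (m:ℝ)*mu)^2 + n*lam^2 + m*mu^2) := by
  have h1 : 0 < lam := hmu.trans_le hml
  have hmu2 : mu < lam₀ := lt_of_le_of_lt hml h2
  have hxc : x ∈ closure D := subset_closure (by rw [hD]; exact ⟨yx, hxy⟩)
  induction m generalizing n with
  | zero =>
    simp only [Nat.cast_zero, Function.iterate_zero_apply, zero_mul, sub_zero, add_zero]
    refine (CL_iter_step_bound hacc hD hJ h1 h2 hxy n).trans ?_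
    have hM : (0:ℝ) ≤ (n:ℝ) * lam := mul_nonneg (Nat.cast_nonneg n) h1.le
    have key : (n:ℝ) * lam * ‖yx‖ = ‖yx‖ * Real.sqrt (((n:ℝ)*lam)^2) := by
      rw [Real.sqrt_sq hM]; ring
    rw [key]
    gcongr
    nlinarith [mul_nonneg (Nat.cast_nonneg n : (0:ℝ) ≤ (n:ℝ)) (sq_nonneg lam)]
  | succ m ih =>
    cases n with
    | zero =>
      rw [Function.iterate_zero_apply, norm_sub_rev]
      have hb := CL_iter_step_bound hacc hD hJ hmu hmu2 hxy (m+1)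
      push_cast at hb ⊢
      refine hb.trans ?_
      have hM : (0:ℝ) ≤ ((m:ℝ)+1) * mu := mul_nonneg (by positivity) hmu.le
      have key : ((m:ℝ)+1) * mu * ‖yx‖ = ‖yx‖ * Real.sqrt ((((m:ℝ)+1)*mu)^2) := by
        rw [Real.sqrt_sq hM]; ring
      rw [key]
      gcongr
      nlinarith [mul_nonneg (by positivity : (0:ℝ) ≤ (m:ℝ)+1) (sq_nonneg mu)]
    | succ n =>
      have hα : (0:ℝ) ≤ mu/lam := by positivity
      have hβ : (0:ℝ) ≤ 1 - mu/lam := by simp [div_le_one h1, hml]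
      have hab : mu/lam + (1 - mu/lam) = 1 := by ring
      set g1 : ℝ := ((n:ℝ)*lam - (m:ℝ)*mu)^2 + n*lam^2 + m*mu^2 with hg1
      set g2 : ℝ := ((↑(n+1):ℝ)*lam - (m:ℝ)*mu)^2 + ↑(n+1)*lam^2 + m*mu^2 with hg2
      have hg1n : 0 ≤ g1 := by positivity
      have hg2n : 0 ≤ g2 := by positivity
      have step := CL_step hacc hD hJ hmu hml h2
        (CL_iter_mem hD hJ h1 h2 hxc n) (CL_iter_mem hD hJ hmu hmu2 hxc m)
      rw [Function.iterate_succ_apply', Function.iterate_succ_apply']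
      have hJstep : J lam ((J lam)^[n] x) = (J lam)^[n+1] x :=
        (Function.iterate_succ_apply' _ _ _).symm
      calc ‖J lam ((J lam)^[n] x) - J mu ((J mu)^[m] x)‖
          ≤ (mu/lam) * ‖(J lam)^[n] x - (J mu)^[m] x‖
            + (1 - mu/lam) * ‖J lam ((J lam)^[n] x) - (J mu)^[m] x‖ := step
        _ = (mu/lam) * ‖(J lam)^[n] x - (J mu)^[m] x‖
            + (1 - mu/lam) * ‖(J lam)^[n+1] x - (J mu)^[m] x‖ := by rw [hJstep]
        _ ≤ (mu/lam) * (‖yx‖ * Real.sqrt g1) + (1 - mu/lam) * (‖yx‖ * Real.sqrt g2) := by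
            gcongr
            · exact ih n
            · exact ih (n+1)
        _ = ‖yx‖ * ((mu/lam) * Real.sqrt g1 + (1 - mu/lam) * Real.sqrt g2) := by ring
        _ ≤ ‖yx‖ * Real.sqrt ((mu/lam) * g1 + (1 - mu/lam) * g2) := by
            gcongr
            exact CL_conc hα hβ hab hg1n hg2n
        _ ≤ ‖yx‖ * Real.sqrt ((↑(n+1)*lam - ↑(m+1)*mu)^2 + ↑(n+1)*lam^2 + ↑(m+1)*mu^2) := by
            refine mul_le_mul_of_nonneg_left (Real.sqrt_le_sqrt ?_) (norm_nonneg _)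
            rw [hg1, hg2]
            push_cast
            rw [CL_arith h1.ne' (n:ℝ) (m:ℝ)]
            nlinarith [sq_nonneg mu]

lemma CL_valid' {lam₀ t : ℝ} (hlam₀ : 0 < lam₀) (ht : 0 < t) :
    ∀ᶠ n : ℕ in atTop, 0 < t/(n:ℝ) ∧ t/(n:ℝ) < lam₀ := by
  filter_upwards [eventually_gt_atTop ⌈t/lam₀⌉₊] with n hn
  have hn0 : (0:ℝ) < n := by
    have : 0 < n := lt_of_le_of_lt (Nat.zero_le _) hn
    exact_mod_cast this
  refine ⟨div_pos ht hn0, ?_⟩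
  rw [div_lt_iff₀ hn0, mul_comm]
  have h1 : t/lam₀ < (n:ℝ) := lt_of_le_of_lt (Nat.le_ceil _) (by exact_mod_cast hn)
  calc t = (t/lam₀)*lam₀ := by field_simp
    _ < n*lam₀ := mul_lt_mul_of_pos_right h1 hlam₀

include hacc hD hlam₀ hJ in
lemma CL_cauchy {x : X} (hx : x ∈ closure D) {t : ℝ} (ht : 0 < t) :
    CauchySeq (fun n : ℕ => (J (t/(n:ℝ)))^[n] x) := by
  rw [Metric.cauchySeq_iff']
  intro ε hε
  obtain ⟨x', hx'D, hdist⟩ := Metric.mem_closure_iff.1 hx (ε/4) (by positivity)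
  obtain ⟨y', hy'⟩ : ∃ y', (x', y') ∈ A := by rw [hD] at hx'D; exact hx'D
  have hx'c : x' ∈ closure D := subset_closure hx'D
  have hb : Tendsto (fun N : ℕ => ‖y'‖ * Real.sqrt (2*t^2/(N:ℝ))) atTop (nhds 0) := by
    have h0 : Tendsto (fun N : ℕ => 2*t^2/(N:ℝ)) atTop (nhds 0) :=
      tendsto_const_div_atTop_nhds_zero_nat _
    have := (h0.sqrt).const_mul (‖y'‖)
    simpa using this
  have hev := ((hb.eventually_lt_const (show (0:ℝ) < ε/4 by positivity)).and
    (CL_valid' hlam₀ ht))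
  obtain ⟨N, hN⟩ := eventually_atTop.1 hev
  refine ⟨N, fun n hn => ?_⟩
  obtain ⟨hbN, hvN⟩ := hN N le_rfl
  obtain ⟨hbn, hvn⟩ := hN n hn
  have hNR : (0:ℝ) < N := by
    by_contra h
    push_neg at h
    have : (N:ℝ) = 0 := le_antisymm h (Nat.cast_nonneg _)
    rw [this, div_zero] at hvN
    exact lt_irrefl _ hvN.1
  have hnR : (0:ℝ) < n := lt_of_lt_of_le hNR (by exact_mod_cast hn)
  have hml : t/(n:ℝ) ≤ t/(N:ℝ) := by
    apply div_le_div_of_nonneg_left ht.le hNR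
    exact_mod_cast hn
  have hcontr_n := CL_iter_contract hacc hD hJ hvn.1 hvn.2 hx hx'c n
  have hcontr_N := CL_iter_contract hacc hD hJ hvN.1 hvN.2 hx hx'c N
  have hcore := CL_core hacc hD hJ hy' hvn.1 hml hvN.2 N n
  have eN : (N:ℝ)*((t/(N:ℝ)))^2 = t^2/N := by field_simp
  have en : (n:ℝ)*((t/(n:ℝ)))^2 = t^2/n := by field_simp
  have eNN : (N:ℝ)*(t/(N:ℝ)) = t := by field_simp
  have enn : (n:ℝ)*(t/(n:ℝ)) = t := by field_simp
  rw [eN, en, eNN, enn, sub_self] at hcore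
  have hmid : ‖(J (t/(N:ℝ)))^[N] x' - (J (t/(n:ℝ)))^[n] x'‖ ≤ ‖y'‖ * Real.sqrt (2*t^2/(N:ℝ)) := by
    refine hcore.trans ?_
    refine mul_le_mul_of_nonneg_left (Real.sqrt_le_sqrt ?_) (norm_nonneg _)
    have : t^2/(n:ℝ) ≤ t^2/(N:ℝ) := by
      apply div_le_div_of_nonneg_left (sq_nonneg t) hNR
      exact_mod_cast hn
    have h2 : 2*t^2/(N:ℝ) = t^2/(N:ℝ) + t^2/(N:ℝ) := by ring
    rw [h2]
    nlinarith [sq_nonneg t]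
  calc dist ((J (t/(n:ℝ)))^[n] x) ((J (t/(N:ℝ)))^[N] x)
      ≤ dist ((J (t/(n:ℝ)))^[n] x) ((J (t/(n:ℝ)))^[n] x')
        + dist ((J (t/(n:ℝ)))^[n] x') ((J (t/(N:ℝ)))^[N] x')
        + dist ((J (t/(N:ℝ)))^[N] x') ((J (t/(N:ℝ)))^[N] x) := dist_triangle4 _ _ _ _
    _ ≤ dist x x' + ‖y'‖ * Real.sqrt (2*t^2/(N:ℝ)) + dist x x' := by
        gcongr
        · rw [dist_eq_norm]; exact hcontr_n.trans (le_of_eq (dist_eq_norm x x').symm)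
        · rw [dist_eq_norm, norm_sub_rev]
          exact hmid
        · rw [dist_eq_norm, dist_eq_norm, norm_sub_rev]
          exact hcontr_N
    _ < ε/4 + ε/4 + ε/4 := by gcongr
    _ < ε := by linarith

variable (S : ℝ → X → X)
  (hS0 : ∀ x : X, S 0 x = x)
  (hSc : ∀ x ∈ closure D, ∀ t : ℝ, 0 < t →
    Tendsto (fun n : ℕ => (J (t/(n:ℝ)))^[n] x) atTop (nhds (S t x)))

include hD hlam₀ hJ hS0 hSc in
lemma CL_S_mem {x : X} (hx : x ∈ closure D) {t : ℝ} (ht : 0 ≤ t) : S t x ∈ closure D := by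
  rcases ht.eq_or_lt with h | h
  · rw [← h, hS0]; exact hx
  · refine isClosed_closure.mem_of_tendsto (hSc x hx t h) ?_
    filter_upwards [CL_valid' hlam₀ h] with n hv
    exact CL_iter_mem hD hJ hv.1 hv.2 hx n

include hacc hD hlam₀ hJ hS0 hSc in
lemma CL_S_contract {x x' : X} (hx : x ∈ closure D) (hx' : x' ∈ closure D) {t : ℝ}
    (ht : 0 ≤ t) : ‖S t x - S t x'‖ ≤ ‖x - x'‖ := by
  rcases ht.eq_or_lt with h | h
  · rw [← h, hS0, hS0]
  · refine le_of_tendsto (((hSc x hx t h).sub (hSc x' hx' t h)).norm) ?_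
    filter_upwards [CL_valid' hlam₀ h] with n hv
    exact CL_iter_contract hacc hD hJ hv.1 hv.2 hx hx' n

include hacc hD hlam₀ hJ hS0 hSc in
lemma CL_S_lip_aux {x yx : X} (hxy : (x, yx) ∈ A) {s t : ℝ} (hs : 0 ≤ s) (hst : s ≤ t) :
    ‖S t x - S s x‖ ≤ ‖yx‖ * (t - s) := by
  have hxc : x ∈ closure D := subset_closure (by rw [hD]; exact ⟨yx, hxy⟩)
  rcases (hs.trans hst).eq_or_lt with ht0 | ht
  · have hs0 : s = 0 := le_antisymm (by linarith) hs
    rw [← ht0, hs0, hS0]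
    simp
  rcases hs.eq_or_lt with hs0 | hs0
  · rw [← hs0, hS0]
    refine le_of_tendsto (((hSc x hxc t ht).sub tendsto_const_nhds).norm) ?_
    filter_upwards [CL_valid' hlam₀ ht] with n hv
    have hn0 : (n:ℝ) ≠ 0 := by
      intro h; rw [h, div_zero] at hv; exact lt_irrefl _ hv.1
    have := CL_iter_step_bound hacc hD hJ hv.1 hv.2 hxy n
    have e : (n:ℝ) * (t/(n:ℝ)) = t := by field_simp
    calc ‖(J (t/(n:ℝ)))^[n] x - x‖ ≤ (n:ℝ) * (t/(n:ℝ)) * ‖yx‖ := this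
      _ = ‖yx‖ * (t - 0) := by rw [e]; ring
  · have hf : Tendsto (fun n : ℕ => ‖(J (t/(n:ℝ)))^[n] x - (J (s/(n:ℝ)))^[n] x‖)
        atTop (nhds ‖S t x - S s x‖) := ((hSc x hxc t ht).sub (hSc x hxc s hs0)).norm
    have hg : Tendsto (fun n : ℕ => ‖yx‖ * Real.sqrt ((t-s)^2 + t^2/(n:ℝ) + s^2/(n:ℝ)))
        atTop (nhds (‖yx‖ * (t - s))) := by
      have h1 : Tendsto (fun n : ℕ => (t-s)^2 + t^2/(n:ℝ) + s^2/(n:ℝ)) atTop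
          (nhds ((t-s)^2 + 0 + 0)) :=
        (tendsto_const_nhds.add (tendsto_const_div_atTop_nhds_zero_nat _)).add
          (tendsto_const_div_atTop_nhds_zero_nat _)
      have := (h1.sqrt).const_mul ‖yx‖
      simpa [Real.sqrt_sq_eq_abs, abs_of_nonneg (sub_nonneg.2 hst)] using this
    refine le_of_tendsto_of_tendsto hf hg ?_
    filter_upwards [CL_valid' hlam₀ ht, CL_valid' hlam₀ hs0] with n hvt hvs
    have hn0 : (n:ℝ) ≠ 0 := by
      intro h; rw [h, div_zero] at hvt; exact lt_irrefl _ hvt.1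
    have hml : s/(n:ℝ) ≤ t/(n:ℝ) := by gcongr
    have hcore := CL_core hacc hD hJ hxy hvs.1 hml hvt.2 n n
    have e : ((n:ℝ)*(t/(n:ℝ)) - (n:ℝ)*(s/(n:ℝ)))^2 + (n:ℝ)*(t/(n:ℝ))^2 + (n:ℝ)*(s/(n:ℝ))^2
        = (t-s)^2 + t^2/(n:ℝ) + s^2/(n:ℝ) := by
      field_simp
    rw [e] at hcore
    exact hcore

include hacc hD hlam₀ hJ hS0 hSc in
lemma CL_S_lip {x yx : X} (hxy : (x, yx) ∈ A) {a b : ℝ} (ha : 0 ≤ a) (hb : 0 ≤ b) :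
    ‖S a x - S b x‖ ≤ ‖yx‖ * |a - b| := by
  rcases le_total b a with h | h
  · rw [abs_of_nonneg (sub_nonneg.2 h)]
    exact CL_S_lip_aux hacc hD hlam₀ hJ S hS0 hSc hxy hb h
  · rw [abs_sub_comm, abs_of_nonneg (sub_nonneg.2 h), norm_sub_rev]
    exact CL_S_lip_aux hacc hD hlam₀ hJ S hS0 hSc hxy ha h

include hacc hD hlam₀ hJ hS0 hSc in
lemma CL_star {x yx : X} (hxy : (x, yx) ∈ A) {lam : ℝ} (h1 : 0 < lam) (h2 : lam < lam₀)
    {n : ℕ} (hn : 1 ≤ n) :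
    ‖(J lam)^[n] x - S ((n:ℝ)*lam) x‖ ≤ ‖yx‖ * (lam * Real.sqrt n) := by
  have hxc : x ∈ closure D := subset_closure (by rw [hD]; exact ⟨yx, hxy⟩)
  have hnR : (0:ℝ) < n := by exact_mod_cast hn
  set t := (n:ℝ)*lam with hT
  have ht : 0 < t := mul_pos hnR h1
  have hcomp : Tendsto (fun k : ℕ => n*k) atTop atTop := by
    apply tendsto_atTop_mono (fun k => ?_) tendsto_id
    calc k = 1*k := (one_mul k).symm
      _ ≤ n*k := Nat.mul_le_mul_right k hn
  have hsub : Tendsto (fun k : ℕ => (J (t/((n*k : ℕ):ℝ)))^[n*k] x) atTop (nhds (S t x)) :=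
    (hSc x hxc t ht).comp hcomp
  have hf : Tendsto (fun k : ℕ => ‖(J lam)^[n] x - (J (t/((n*k : ℕ):ℝ)))^[n*k] x‖)
      atTop (nhds ‖(J lam)^[n] x - S t x‖) := (tendsto_const_nhds.sub hsub).norm
  have hg : Tendsto (fun k : ℕ => ‖yx‖ * Real.sqrt ((n:ℝ)*lam^2 + (n:ℝ)*lam^2/(k:ℝ)))
      atTop (nhds (‖yx‖*(lam*Real.sqrt n))) := by
    have h1' : Tendsto (fun k : ℕ => (n:ℝ)*lam^2 + (n:ℝ)*lam^2/(k:ℝ)) atTop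
        (nhds ((n:ℝ)*lam^2 + 0)) :=
      tendsto_const_nhds.add (tendsto_const_div_atTop_nhds_zero_nat _)
    have h2' := (h1'.sqrt).const_mul ‖yx‖
    have e : Real.sqrt ((n:ℝ)*lam^2 + 0) = lam * Real.sqrt n := by
      rw [add_zero, mul_comm, Real.sqrt_mul (sq_nonneg lam), Real.sqrt_sq h1.le]
    rw [e] at h2'
    exact h2'
  refine le_of_tendsto_of_tendsto hf hg ?_
  filter_upwards [eventually_ge_atTop 1] with k hk
  have hkR : (0:ℝ) < k := by exact_mod_cast hk
  have hk1 : (1:ℝ) ≤ k := by exact_mod_cast hk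
  have hnk : ((n*k : ℕ):ℝ) = (n:ℝ)*(k:ℝ) := by push_cast; ring
  have hmu : 0 < t/((n*k:ℕ):ℝ) := by
    apply div_pos ht
    rw [hnk]; exact mul_pos hnR hkR
  have hml : t/((n*k:ℕ):ℝ) ≤ lam := by
    rw [hnk, hT, div_le_iff₀ (mul_pos hnR hkR)]
    nlinarith [mul_pos hnR h1]
  have hcore := CL_core hacc hD hJ hxy hmu hml h2 n (n*k)
  have e : ((n:ℝ)*lam - ((n*k:ℕ):ℝ)*(t/((n*k:ℕ):ℝ)))^2 + (n:ℝ)*lam^2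
      + ((n*k:ℕ):ℝ)*(t/((n*k:ℕ):ℝ))^2 = (n:ℝ)*lam^2 + (n:ℝ)*lam^2/(k:ℝ) := by
    rw [hnk, hT]
    field_simp
    ring
  rw [e] at hcore
  exact hcore

include hacc hD hlam₀ hJ hS0 hSc in
lemma CL_gen {y : X} (hy : y ∈ closure D) {T : ℝ} (hT : 0 < T) (lamf : ℕ → ℝ) (Nf : ℕ → ℕ)
    (hpos : ∀ᶠ k in atTop, 0 < lamf k)
    (hto0 : Tendsto lamf atTop (nhds 0))
    (hprod : Tendsto (fun k => (Nf k : ℝ) * lamf k) atTop (nhds T)) :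
    Tendsto (fun k => (J (lamf k))^[Nf k] y) atTop (nhds (S T y)) := by
  rw [Metric.tendsto_atTop]
  intro ε hε
  obtain ⟨x', hx'D, hdist⟩ := Metric.mem_closure_iff.1 hy (ε/4) (by positivity)
  obtain ⟨y', hy'⟩ : ∃ y', (x', y') ∈ A := by rw [hD] at hx'D; exact hx'D
  have hx'c : x' ∈ closure D := subset_closure hx'D
  have hb : Tendsto (fun k => ‖y'‖ * (lamf k * Real.sqrt (Nf k))
      + ‖y'‖ * |(Nf k:ℝ) * lamf k - T|) atTop (nhds 0) := by
    have h1 : Tendsto (fun k => lamf k * Real.sqrt (Nf k)) atTop (nhds 0) := by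
      have h2 : Tendsto (fun k => Real.sqrt (lamf k) * Real.sqrt ((Nf k:ℝ) * lamf k))
          atTop (nhds (Real.sqrt 0 * Real.sqrt T)) := (hto0.sqrt).mul (hprod.sqrt)
      rw [Real.sqrt_zero, zero_mul] at h2
      apply h2.congr'
      filter_upwards [hpos] with k hk
      rw [← Real.sqrt_mul hk.le]
      have e : lamf k * ((Nf k:ℝ) * lamf k) = lamf k^2 * (Nf k:ℝ) := by ring
      rw [e, Real.sqrt_mul (sq_nonneg _), Real.sqrt_sq hk.le]
    have h3 : Tendsto (fun k => |(Nf k:ℝ) * lamf k - T|) atTop (nhds 0) := by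
      have := (hprod.sub_const T).abs
      simpa using this
    have := (h1.const_mul ‖y'‖).add (h3.const_mul ‖y'‖)
    simpa using this
  have hsmall := hb.eventually_lt_const (show (0:ℝ) < ε/2 by positivity)
  have hlam_small : ∀ᶠ k in atTop, lamf k < lam₀ := hto0.eventually_lt_const hlam₀
  have hN1 : ∀ᶠ k in atTop, 1 ≤ Nf k := by
    filter_upwards [hprod.eventually_const_lt hT] with k hk
    by_contra h
    push_neg at h
    have h0 : Nf k = 0 := Nat.lt_one_iff.1 h
    rw [h0] at hk
    simp at hk
  obtain ⟨K, hK⟩ := eventually_atTop.1 ((hsmall.and hlam_small).and (hN1.and hpos))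
  refine ⟨K, fun k hk => ?_⟩
  obtain ⟨⟨hsm, hls⟩, hn1, hp⟩ := hK k hk
  have hNT : 0 ≤ (Nf k:ℝ) * lamf k := mul_nonneg (Nat.cast_nonneg _) hp.le
  have hstar := CL_star hacc hD hlam₀ hJ S hS0 hSc hy' hp hls hn1
  have hlip := CL_S_lip hacc hD hlam₀ hJ S hS0 hSc hy' hNT hT.le
  have hcontr := CL_iter_contract hacc hD hJ hp hls hy hx'c (Nf k)
  have hScontr := CL_S_contract hacc hD hlam₀ hJ S hS0 hSc hx'c hy hT.le
  have h4 := dist_triangle4 ((J (lamf k))^[Nf k] y) ((J (lamf k))^[Nf k] x')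
    (S ((Nf k:ℝ)*lamf k) x') (S T y)
  have h5 := dist_triangle (S ((Nf k:ℝ)*lamf k) x') (S T x') (S T y)
  have t1 : dist ((J (lamf k))^[Nf k] y) ((J (lamf k))^[Nf k] x') ≤ dist y x' := by
    rw [dist_eq_norm, dist_eq_norm]; exact hcontr
  have t2 : dist ((J (lamf k))^[Nf k] x') (S ((Nf k:ℝ)*lamf k) x')
      ≤ ‖y'‖*(lamf k * Real.sqrt (Nf k)) := by rw [dist_eq_norm]; exact hstar
  have t3 : dist (S ((Nf k:ℝ)*lamf k) x') (S T x') ≤ ‖y'‖*|(Nf k:ℝ)*lamf k - T| := by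
    rw [dist_eq_norm]; exact hlip
  have t4 : dist (S T x') (S T y) ≤ dist y x' := by
    rw [dist_eq_norm, dist_comm, dist_eq_norm]; exact hScontr
  linarith

end CL

open Filter in
/-- **Crandall–Liggett generation theorem.** Let `A ⊆ X × X` be an accretive (possibly
multivalued) operator on a real Banach space `X` with domain `D`, and suppose that for
all sufficiently small `λ > 0` the resolvent `J_λ` is defined on all of `closure D`,
i.e. for every `z ∈ closure D` there is `y` with `(J_λ z, y) ∈ A` and `J_λ z + λ•y = z`.
Then for every `x ∈ closure D` and `t ≥ 0` the exponential-formula iterates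
`(J_{t/n})^n x` converge, and the limits `S(t)x` form a strongly continuous contraction
semigroup on `closure D`. -/
theorem crandall_liggett_generation
    {X : Type*} [NormedAddCommGroup X] [NormedSpace ℝ X] [CompleteSpace X]
    (A : Set (X × X))
    (hacc : ∀ p ∈ A, ∀ q ∈ A, ∀ lam : ℝ, 0 < lam →
      ‖p.1 - q.1‖ ≤ ‖p.1 - q.1 + lam • (p.2 - q.2)‖)
    (D : Set X) (hD : D = {x | ∃ y : X, (x, y) ∈ A})
    (lam₀ : ℝ) (hlam₀ : 0 < lam₀)
    (J : ℝ → X → X)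
    (hJ : ∀ lam : ℝ, 0 < lam → lam < lam₀ → ∀ z ∈ closure D,
      ∃ y : X, (J lam z, y) ∈ A ∧ J lam z + lam • y = z) :
    ∃ S : ℝ → X → X,
      (∀ x ∈ closure D, ∀ t : ℝ, 0 ≤ t →
        Tendsto (fun n : ℕ => if t = 0 then x else (J (t / (n : ℝ)))^[n] x)
          atTop (nhds (S t x))) ∧
      (∀ x ∈ closure D, ∀ t : ℝ, 0 ≤ t → S t x ∈ closure D) ∧
      (∀ x ∈ closure D, S 0 x = x) ∧
      (∀ x ∈ closure D, ∀ s t : ℝ, 0 ≤ s → 0 ≤ t → S (t + s) x = S t (S s x)) ∧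
      (∀ x ∈ closure D, ∀ x' ∈ closure D, ∀ t : ℝ, 0 ≤ t →
        ‖S t x - S t x'‖ ≤ ‖x - x'‖) ∧
      (∀ x ∈ closure D, ContinuousOn (fun t : ℝ => S t x) (Set.Ici 0)) := by
  classical
  have hconv : ∀ x ∈ closure D, ∀ t : ℝ, 0 < t →
      ∃ l : X, Tendsto (fun n : ℕ => (J (t/(n:ℝ)))^[n] x) atTop (nhds l) :=
    fun x hx t ht => cauchySeq_tendsto_of_complete (CL_cauchy hacc hD hlam₀ hJ hx ht)
  set S : ℝ → X → X := fun t x =>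
    if h : x ∈ closure D ∧ 0 < t then (hconv x h.1 t h.2).choose else x with hSdef
  have hS0 : ∀ x : X, S 0 x = x := by
    intro x
    rw [hSdef]
    simp
  have hSc : ∀ x ∈ closure D, ∀ t : ℝ, 0 < t →
      Tendsto (fun n : ℕ => (J (t/(n:ℝ)))^[n] x) atTop (nhds (S t x)) := by
    intro x hx t ht
    have e : S t x = (hconv x hx t ht).choose := by
      rw [hSdef]
      exact dif_pos ⟨hx, ht⟩
    rw [e]
    exact (hconv x hx t ht).choose_spec
  refine ⟨S, ?_, ?_, ?_, ?_, ?_, ?_⟩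
  · -- convergence of the exponential formula
    intro x hx t ht
    rcases ht.eq_or_lt with h | h
    · simp only [← h]
      simpa [hS0 x] using (tendsto_const_nhds : Tendsto (fun _ : ℕ => x) atTop (nhds x))
    · simp only [h.ne', if_false]
      exact hSc x hx t h
  · -- invariance of closure D
    exact fun x hx t ht => CL_S_mem hD hlam₀ hJ S hS0 hSc hx ht
  · -- S 0 = id
    exact fun x _ => hS0 x
  · -- semigroup property
    intro x hx s t hs ht
    rcases hs.eq_or_lt with hs0 | hs0
    · rw [← hs0, add_zero, hS0]
    rcases ht.eq_or_lt with ht0 | ht0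
    · rw [← ht0, zero_add, hS0]
    have hpos : ∀ᶠ m : ℕ in atTop, 0 < s/(m:ℝ) := by
      filter_upwards [eventually_ge_atTop 1] with m hm
      have : (0:ℝ) < m := by exact_mod_cast hm
      exact div_pos hs0 this
    have hto0 : Tendsto (fun m : ℕ => s/(m:ℝ)) atTop (nhds 0) :=
      tendsto_const_div_atTop_nhds_zero_nat s
    have hbound : ∀ m : ℕ, 1 ≤ m →
        t ≤ ((⌈t*(m:ℝ)/s⌉₊:ℝ)) * (s/(m:ℝ)) ∧ ((⌈t*(m:ℝ)/s⌉₊:ℝ)) * (s/(m:ℝ)) ≤ t + s/(m:ℝ) := by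
      intro m hm
      have hmR : (0:ℝ) < m := by exact_mod_cast hm
      have h1 : t*(m:ℝ)/s ≤ (⌈t*(m:ℝ)/s⌉₊:ℝ) := Nat.le_ceil _
      have h2 : (⌈t*(m:ℝ)/s⌉₊:ℝ) < t*(m:ℝ)/s + 1 :=
        Nat.ceil_lt_add_one (by positivity)
      have hsm : (0:ℝ) < s/(m:ℝ) := div_pos hs0 hmR
      constructor
      · calc t = (t*(m:ℝ)/s) * (s/(m:ℝ)) := by field_simp
          _ ≤ (⌈t*(m:ℝ)/s⌉₊:ℝ) * (s/(m:ℝ)) := mul_le_mul_of_nonneg_right h1 hsm.le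
      · calc (⌈t*(m:ℝ)/s⌉₊:ℝ) * (s/(m:ℝ)) ≤ (t*(m:ℝ)/s + 1) * (s/(m:ℝ)) :=
            mul_le_mul_of_nonneg_right h2.le hsm.le
          _ = t + s/(m:ℝ) := by field_simp
    have htplus : Tendsto (fun m : ℕ => t + s/(m:ℝ)) atTop (nhds t) := by
      have := (tendsto_const_nhds : Tendsto (fun _ : ℕ => t) atTop (nhds t)).add
        (tendsto_const_div_atTop_nhds_zero_nat s)
      simpa using this
    have hprod_t : Tendsto (fun m : ℕ => ((⌈t*(m:ℝ)/s⌉₊:ℝ)) * (s/(m:ℝ))) atTop (nhds t) := by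
      refine tendsto_of_tendsto_of_tendsto_of_le_of_le' tendsto_const_nhds htplus ?_ ?_
      · filter_upwards [eventually_ge_atTop 1] with m hm
        exact (hbound m hm).1
      · filter_upwards [eventually_ge_atTop 1] with m hm
        exact (hbound m hm).2
    have hprod_ts : Tendsto (fun m : ℕ => ((⌈t*(m:ℝ)/s⌉₊ + m : ℕ):ℝ) * (s/(m:ℝ)))
        atTop (nhds (t+s)) := by
      refine Filter.Tendsto.congr' ?_ (hprod_t.add_const s)
      filter_upwards [eventually_ge_atTop 1] with m hm
      have hmR : (0:ℝ) < m := by exact_mod_cast hm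
      push_cast
      field_simp
    have h_main : Tendsto (fun m : ℕ => (J (s/(m:ℝ)))^[⌈t*(m:ℝ)/s⌉₊ + m] x)
        atTop (nhds (S (t+s) x)) :=
      CL_gen hacc hD hlam₀ hJ S hS0 hSc hx (by linarith) _ _ hpos hto0 hprod_ts
    have h_inner : Tendsto (fun m : ℕ => (J (s/(m:ℝ)))^[m] x) atTop (nhds (S s x)) :=
      hSc x hx s hs0
    have hSsmem : S s x ∈ closure D := CL_S_mem hD hlam₀ hJ S hS0 hSc hx hs
    have h_outer : Tendsto (fun m : ℕ => (J (s/(m:ℝ)))^[⌈t*(m:ℝ)/s⌉₊] (S s x))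
        atTop (nhds (S t (S s x))) :=
      CL_gen hacc hD hlam₀ hJ S hS0 hSc hSsmem ht0 _ _ hpos hto0 hprod_t
    have h_dist : Tendsto (fun m : ℕ => dist ((J (s/(m:ℝ)))^[⌈t*(m:ℝ)/s⌉₊ + m] x)
        ((J (s/(m:ℝ)))^[⌈t*(m:ℝ)/s⌉₊] (S s x))) atTop (nhds 0) := by
      refine squeeze_zero' (by filter_upwards with m; exact dist_nonneg) ?_
        (tendsto_iff_dist_tendsto_zero.1 h_inner)
      filter_upwards [CL_valid' hlam₀ hs0] with m hv
      rw [Function.iterate_add_apply, dist_eq_norm, dist_eq_norm]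
      exact CL_iter_contract hacc hD hJ hv.1 hv.2
        (CL_iter_mem hD hJ hv.1 hv.2 hx m) hSsmem _
    have h_final : Tendsto (fun m : ℕ => (J (s/(m:ℝ)))^[⌈t*(m:ℝ)/s⌉₊ + m] x)
        atTop (nhds (S t (S s x))) := by
      rw [tendsto_iff_dist_tendsto_zero]
      refine squeeze_zero'
        (g := fun m : ℕ => dist ((J (s/(m:ℝ)))^[⌈t*(m:ℝ)/s⌉₊ + m] x)
            ((J (s/(m:ℝ)))^[⌈t*(m:ℝ)/s⌉₊] (S s x))
          + dist ((J (s/(m:ℝ)))^[⌈t*(m:ℝ)/s⌉₊] (S s x)) (S t (S s x)))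
        (by filter_upwards with m; exact dist_nonneg)
        (by filter_upwards with m; exact dist_triangle _ _ _) ?_
      have := h_dist.add (tendsto_iff_dist_tendsto_zero.1 h_outer)
      simpa using this
    exact tendsto_nhds_unique h_main h_final
  · -- contraction
    exact fun x hx x' hx' t ht => CL_S_contract hacc hD hlam₀ hJ S hS0 hSc hx hx' ht
  · -- strong continuity
    intro x hx
    intro t₀ ht₀
    rw [Metric.continuousWithinAt_iff]
    intro ε hε
    obtain ⟨x', hx'D, hdist⟩ := Metric.mem_closure_iff.1 hx (ε/3) (by positivity)
    obtain ⟨y', hy'⟩ : ∃ y', (x', y') ∈ A := by rw [hD] at hx'D; exact hx'D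
    have hx'c : x' ∈ closure D := subset_closure hx'D
    have hK1 : (0:ℝ) < ‖y'‖ + 1 := by positivity
    refine ⟨ε/(3*(‖y'‖+1)), by positivity, ?_⟩
    intro u hu hdu
    have hu0 : (0:ℝ) ≤ u := hu
    have ht0' : (0:ℝ) ≤ t₀ := ht₀
    have t1 : dist (S u x) (S u x') ≤ dist x x' := by
      rw [dist_eq_norm, dist_eq_norm]
      exact CL_S_contract hacc hD hlam₀ hJ S hS0 hSc hx hx'c hu0
    have t3 : dist (S t₀ x') (S t₀ x) ≤ dist x x' := by
      rw [dist_comm, dist_eq_norm, dist_eq_norm]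
      exact CL_S_contract hacc hD hlam₀ hJ S hS0 hSc hx hx'c ht0'
    have t2 : dist (S u x') (S t₀ x') ≤ ‖y'‖ * |u - t₀| := by
      rw [dist_eq_norm]
      exact CL_S_lip hacc hD hlam₀ hJ S hS0 hSc hy' hu0 ht0'
    have heq : ‖y'‖ * (ε/(3*(‖y'‖+1))) + (ε/(3*(‖y'‖+1))) = ε/3 := by
      field_simp
    have hδpos : (0:ℝ) < ε/(3*(‖y'‖+1)) := by positivity
    have t2' : dist (S u x') (S t₀ x') < ε/3 := by
      have habs : |u - t₀| < ε/(3*(‖y'‖+1)) := by rwa [← Real.dist_eq]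
      have := mul_le_mul_of_nonneg_left habs.le (norm_nonneg y')
      linarith
    have htri := dist_triangle4 (S u x) (S u x') (S t₀ x') (S t₀ x)
    have : dist (S u x) (S t₀ x) < ε/3 + ε/3 + ε/3 := by linarith
    linarith
end
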